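/- arXiv:2302.10604 — 5 statements merged into one kernel-verified Lean document; each statement's English description precedes it below -/
import Mathlib

section
/- Let M ∈ ℂ^{2n×2n} be such that the pencil φ(z) = M + zMᵀ is regular. Let U₁, U₂, V₁, V₂, A', B' ∈ ℂ^{n×n} satisfy M·[U₁; U₂] = [V₁; V₂]·A' and Mᵀ·[U₁; U₂] = [V₁; V₂]·B', where the 2n×n block matrices [U₁; U₂] and [V₁; V₂] (vertical concatenations) both have rank n, and the pencil α(z) = A' + zB' is regular with reciprocal-free spectrum. Then U₁ is invertible if and only if V₂ is invertible. -/
open scoped Matrix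

/-- A pencil `A + z B` of square complex matrices is regular
if `det (A + z B)` is not identically zero. -/
def PencilRegular {ι : Type*} [Fintype ι] [DecidableEq ι] (A B : Matrix ι ι ℂ) : Prop :=
  ∃ z : ℂ, (A + z • B).det ≠ 0

/-- The spectrum of the pencil `A + z B` is reciprocal-free: no pair of eigenvalues
`(z, w)` with `z w = 1`, and `0` and `∞` are not both eigenvalues. -/
def PencilReciprocalFree {ι : Type*} [Fintype ι] [DecidableEq ι]
    (A B : Matrix ι ι ℂ) : Prop :=
  (¬ ∃ z w : ℂ, z * w = 1 ∧ (A + z • B).det = 0 ∧ (A + w • B).det = 0) ∧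
    ¬ (A.det = 0 ∧ B.det = 0)

open Polynomial Matrix

private lemma isUnit_list_prod' {R : Type*} [Monoid R] (l : List R)
    (h : ∀ x ∈ l, IsUnit x) : IsUnit l.prod := by
  induction l with
  | nil => simp
  | cons a t ih =>
    rw [List.prod_cons]
    exact (h a List.mem_cons_self).mul
      (ih fun x hx => h x (List.mem_cons_of_mem a hx))

private lemma eval_det_pencil {n : ℕ} (A B : Matrix (Fin n) (Fin n) ℂ) (t : ℂ) :
    ((A.map C + (X : ℂ[X]) • B.map C).det).eval t = (A + t • B).det := by
  have h := RingHom.map_det (evalRingHom t) (A.map C + (X : ℂ[X]) • B.map C)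
  simp only [coe_evalRingHom] at h
  rw [show ((A.map C + (X : ℂ[X]) • B.map C).det).eval t
      = Polynomial.eval t ((A.map C + (X : ℂ[X]) • B.map C).det) from rfl, h]
  congr 1
  ext i j
  simp only [RingHom.mapMatrix_apply, Matrix.map_apply, Matrix.add_apply,
    Matrix.smul_apply, smul_eq_mul, coe_evalRingHom, eval_add, eval_mul, eval_C, eval_X]

private lemma exists_good_z {n : ℕ} (A B : Matrix (Fin n) (Fin n) ℂ)
    (hreg : PencilRegular A B) :
    ∃ z : ℂ, IsUnit (A + z • B).det ∧ IsUnit (B + z • A).det ∧ z * z ≠ 1 := by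
  classical
  set pA : ℂ[X] := (A.map C + (X : ℂ[X]) • B.map C).det with hpA
  set pB : ℂ[X] := (B.map C + (X : ℂ[X]) • A.map C).det with hpB
  obtain ⟨z₀, hz₀⟩ := hreg
  have hpA_ne : pA ≠ 0 := by
    intro h
    exact hz₀ (by rw [← eval_det_pencil A B z₀, ← hpA, h, eval_zero])
  have hpB_ne : pB ≠ 0 := by
    intro h
    have hroots : ∀ s : ℂ, s ≠ 0 → pA.IsRoot s := by
      intro s hs
      have h2 : (B + s⁻¹ • A).det = 0 := by
        rw [← eval_det_pencil B A, ← hpB, h, eval_zero]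
      have h3 : A + s • B = s • (B + s⁻¹ • A) := by
        rw [smul_add, smul_smul, mul_inv_cancel₀ hs, one_smul, add_comm]
      show pA.eval s = 0
      rw [hpA, eval_det_pencil, h3, Matrix.det_smul, h2, mul_zero]
    have hfin : ({x | pA.IsRoot x} : Set ℂ).Finite := Polynomial.finite_setOf_isRoot hpA_ne
    have hsub : ({(0 : ℂ)}ᶜ : Set ℂ) ⊆ {x | pA.IsRoot x} := fun s hs => hroots s hs
    have hinf : ({x | pA.IsRoot x} : Set ℂ).Infinite :=
      Set.Infinite.mono hsub ((Set.finite_singleton (0 : ℂ)).infinite_compl)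
    exact hinf hfin
  have hfinbad : ({x | pA.IsRoot x} ∪ {x | pB.IsRoot x} ∪ {1, -1} : Set ℂ).Finite :=
    ((Polynomial.finite_setOf_isRoot hpA_ne).union
      (Polynomial.finite_setOf_isRoot hpB_ne)).union ((Set.finite_singleton (-1 : ℂ)).insert 1)
  obtain ⟨z, hz⟩ := hfinbad.infinite_compl.nonempty
  simp only [Set.mem_compl_iff, Set.mem_union, not_or] at hz
  obtain ⟨⟨hzA, hzB⟩, hz1⟩ := hz
  refine ⟨z, ?_, ?_, ?_⟩
  · rw [isUnit_iff_ne_zero, ← eval_det_pencil A B z]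
    exact hzA
  · rw [isUnit_iff_ne_zero, ← eval_det_pencil B A z]
    exact hzB
  · intro h
    rcases mul_self_eq_one_iff.mp h with h1 | h1 <;> simp [h1] at hz1

private lemma not_both_det_zero {n : ℕ} {A B : Matrix (Fin n) (Fin n) ℂ}
    (hrf : PencilReciprocalFree A B) (c d : ℂ) (hcd : ¬(c = 0 ∧ d = 0))
    (h1 : (c • A + d • B).det = 0) (h2 : (d • A + c • B).det = 0) : False := by
  rcases eq_or_ne c 0 with hc | hc
  · have hd : d ≠ 0 := fun hd => hcd ⟨hc, hd⟩
    rw [hc, zero_smul, zero_add, Matrix.det_smul] at h1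
    rw [hc, zero_smul, add_zero, Matrix.det_smul] at h2
    exact hrf.2 ⟨(mul_eq_zero.mp h2).resolve_left (pow_ne_zero _ hd),
      (mul_eq_zero.mp h1).resolve_left (pow_ne_zero _ hd)⟩
  rcases eq_or_ne d 0 with hd | hd
  · rw [hd, zero_smul, add_zero, Matrix.det_smul] at h1
    rw [hd, zero_smul, zero_add, Matrix.det_smul] at h2
    exact hrf.2 ⟨(mul_eq_zero.mp h1).resolve_left (pow_ne_zero _ hc),
      (mul_eq_zero.mp h2).resolve_left (pow_ne_zero _ hc)⟩
  · have e1 : (A + (d / c) • B).det = 0 := by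
      have h3 : c • (A + (d / c) • B) = c • A + d • B := by
        rw [smul_add, smul_smul, mul_div_cancel₀ _ hc]
      have h4 := congrArg Matrix.det h3
      rw [Matrix.det_smul, h1] at h4
      exact (mul_eq_zero.mp h4).resolve_left (pow_ne_zero _ hc)
    have e2 : (A + (c / d) • B).det = 0 := by
      have h3 : d • (A + (c / d) • B) = d • A + c • B := by
        rw [smul_add, smul_smul, mul_div_cancel₀ _ hd]
      have h4 := congrArg Matrix.det h3
      rw [Matrix.det_smul, h2] at h4
      exact (mul_eq_zero.mp h4).resolve_left (pow_ne_zero _ hd)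
    exact hrf.1 ⟨d / c, c / d, by field_simp, e1, e2⟩

private lemma eval_charpoly' {n : ℕ} (a : ℂ) (S : Matrix (Fin n) (Fin n) ℂ) :
    (S.charpoly).eval a = (a • (1 : Matrix (Fin n) (Fin n) ℂ) - S).det := by
  have h := RingHom.map_det (evalRingHom a) (Matrix.charmatrix S)
  simp only [coe_evalRingHom] at h
  rw [Matrix.charpoly, show ((Matrix.charmatrix S).det).eval a
      = Polynomial.eval a ((Matrix.charmatrix S).det) from rfl, h]
  congr 1
  ext i j
  by_cases hij : i = j
  · subst hij
    simp [Matrix.charmatrix_apply_eq, Matrix.one_apply, Matrix.map_apply]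
  · simp [Matrix.charmatrix_apply_ne _ _ _ hij, Matrix.one_apply, hij, Matrix.map_apply]

private lemma K_eq_zero {n : ℕ} {A B K : Matrix (Fin n) (Fin n) ℂ}
    (hreg : PencilRegular A B) (hrf : PencilReciprocalFree A B)
    (hR : K * A = Bᵀ * Kᵀ) : K = 0 := by
  classical
  obtain ⟨z, hAz, hBz, hz2⟩ := exists_good_z A B hreg
  set Az : Matrix (Fin n) (Fin n) ℂ := A + z • B with hAzdef
  set Bz : Matrix (Fin n) (Fin n) ℂ := B + z • A with hBzdef
  have hR2 : K * B = Aᵀ * Kᵀ := by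
    have h := congrArg Matrix.transpose hR
    simp only [Matrix.transpose_mul, Matrix.transpose_transpose] at h
    exact h.symm
  have hRz : K * Az = Bzᵀ * Kᵀ := by
    rw [hAzdef, hBzdef, Matrix.mul_add, Matrix.mul_smul, Matrix.transpose_add,
      Matrix.transpose_smul, Matrix.add_mul, Matrix.smul_mul, hR, hR2]
  have hRzT : Azᵀ * Kᵀ = K * Bz := by
    have h := congrArg Matrix.transpose hRz
    simp only [Matrix.transpose_mul, Matrix.transpose_transpose] at h
    exact h
  have hBzT : IsUnit Bzᵀ.det := by rwa [Matrix.det_transpose]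
  set N : Matrix (Fin n) (Fin n) ℂ := (Bz⁻¹ * Az)ᵀ with hNdef
  set Q : Matrix (Fin n) (Fin n) ℂ := Bz * Az⁻¹ with hQdef
  have h1 : Bzᵀ⁻¹ * K = Kᵀ * Az⁻¹ := by
    have h := congrArg (fun Y => Bzᵀ⁻¹ * Y * Az⁻¹) hRz
    simp only [Matrix.mul_assoc] at h
    rw [Matrix.mul_nonsing_inv _ hAz, Matrix.mul_one] at h
    rw [← Matrix.mul_assoc Bzᵀ⁻¹ Bzᵀ _, Matrix.nonsing_inv_mul _ hBzT, Matrix.one_mul] at h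
    exact h
  have hKQ : K * Q = N * K := by
    calc K * Q = (K * Bz) * Az⁻¹ := by rw [hQdef, Matrix.mul_assoc]
    _ = Azᵀ * (Kᵀ * Az⁻¹) := by rw [← hRzT, Matrix.mul_assoc]
    _ = Azᵀ * (Bzᵀ⁻¹ * K) := by rw [h1]
    _ = N * K := by
        rw [hNdef, Matrix.transpose_mul, Matrix.transpose_nonsing_inv, Matrix.mul_assoc]
  have hpow : ∀ k : ℕ, K * Q ^ k = N ^ k * K := by
    intro k
    induction k with
    | zero => simp
    | succ k ih =>
      rw [pow_succ, pow_succ, ← Matrix.mul_assoc, ih, Matrix.mul_assoc, hKQ,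
        ← Matrix.mul_assoc]
  have hq : ∀ q : ℂ[X], K * (Polynomial.aeval Q) q = (Polynomial.aeval N) q * K := by
    intro q
    induction q using Polynomial.induction_on' with
    | add p q hp hq => rw [map_add, map_add, Matrix.mul_add, Matrix.add_mul, hp, hq]
    | monomial k c =>
      rw [Polynomial.aeval_monomial, Polynomial.aeval_monomial,
        Algebra.algebraMap_eq_smul_one]
      simp only [smul_mul_assoc, one_mul, mul_smul_comm]
      rw [hpow k]
  have hCH : (Polynomial.aeval N) Q.charpoly * K = 0 := by
    rw [← hq, Matrix.aeval_self_charpoly, Matrix.mul_zero]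
  have hfac : ∀ a ∈ Q.charpoly.roots, IsUnit (N - a • 1) := by
    intro a ha
    have haroot : (Q.charpoly).eval a = 0 := (Polynomial.mem_roots'.mp ha).2
    rw [eval_charpoly'] at haroot
    -- det (a • Az - Bz) = 0
    have h3 : (a • Az - Bz).det = 0 := by
      have h4 : a • (1 : Matrix (Fin n) (Fin n) ℂ) - Q = (a • Az - Bz) * Az⁻¹ := by
        rw [Matrix.sub_mul, Matrix.smul_mul, Matrix.mul_nonsing_inv _ hAz, hQdef]
      have h5 := congrArg Matrix.det h4
      rw [haroot, Matrix.det_mul] at h5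
      have h6 : IsUnit (Az⁻¹).det := Matrix.isUnit_nonsing_inv_det _ hAz
      exact ((mul_eq_zero.mp h5.symm).resolve_right (isUnit_iff_ne_zero.mp h6))
    -- goal : IsUnit (N - a • 1), reduce to det (Az - a • Bz) ≠ 0
    have h7 : (Az - a • Bz).det ≠ 0 := by
      intro h8
      -- rewrite both dets in the c•A + d•B shape
      have e1 : a • Az - Bz = (a - z) • A + (a * z - 1) • B := by
        rw [hAzdef, hBzdef]
        rw [smul_add, smul_smul, sub_smul, sub_smul, one_smul]
        abel
      have e2 : Az - a • Bz = -((a * z - 1) • A + (a - z) • B) := by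
        rw [hAzdef, hBzdef]
        rw [smul_add, smul_smul, sub_smul, sub_smul, one_smul, neg_add]
        abel
      rw [e1] at h3
      rw [e2, Matrix.det_neg] at h8
      have h9 : ((a * z - 1) • A + (a - z) • B).det = 0 := by
        rcases mul_eq_zero.mp h8 with h | h
        · exact absurd h (pow_ne_zero _ (by norm_num))
        · exact h
      refine not_both_det_zero hrf (a - z) (a * z - 1) ?_ h3 h9
      rintro ⟨hc, hd⟩
      exact hz2 (by linear_combination hd - z * hc)
    have h10 : N - a • 1 = (Bz⁻¹ * (Az - a • Bz))ᵀ := by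
      rw [Matrix.mul_sub, Matrix.mul_smul, Matrix.nonsing_inv_mul _ hBz,
        Matrix.transpose_sub, Matrix.transpose_smul, Matrix.transpose_one, hNdef]
    rw [h10, Matrix.isUnit_iff_isUnit_det, Matrix.det_transpose, Matrix.det_mul,
      isUnit_iff_ne_zero]
    exact mul_ne_zero (isUnit_iff_ne_zero.mp (Matrix.isUnit_nonsing_inv_det _ hBz)) h7
  have hunit : IsUnit ((Polynomial.aeval N) Q.charpoly) := by
    have hmonic := Q.charpoly_monic
    have hsplit := Polynomial.Splits.eq_prod_roots_of_monic
      (IsAlgClosed.splits _) hmonic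
    have hlist : Q.charpoly = ((Q.charpoly.roots.toList).map (fun a => X - C a)).prod := by
      conv_lhs => rw [hsplit]
      rw [← Multiset.coe_toList Q.charpoly.roots, Multiset.map_coe, Multiset.prod_coe,
        Multiset.coe_toList]
    rw [hlist, map_list_prod, List.map_map]
    apply isUnit_list_prod'
    intro x hx
    obtain ⟨a, ha, rfl⟩ := List.mem_map.mp hx
    have ha2 : a ∈ Q.charpoly.roots := (Multiset.mem_toList).mp ha
    have heq : ((Polynomial.aeval N) ∘ fun a => X - C a) a = N - a • 1 := by
      simp only [Function.comp_apply, map_sub, Polynomial.aeval_X, Polynomial.aeval_C,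
        Algebra.algebraMap_eq_smul_one]
    rw [heq]
    exact hfac a ha2
  obtain ⟨u, hu⟩ := hunit
  calc K = 1 * K := (Matrix.one_mul K).symm
  _ = (↑u⁻¹ * ↑u) * K := by rw [Units.inv_mul]
  _ = ↑u⁻¹ * ((Polynomial.aeval N) Q.charpoly * K) := by rw [Matrix.mul_assoc, hu]
  _ = 0 := by rw [hCH, Matrix.mul_zero]

private lemma mulVec_inj_of_rank {m : Type*} [Fintype m] {n : ℕ} (W : Matrix m (Fin n) ℂ)
    (h : W.rank = n) {v : Fin n → ℂ} (hv : W *ᵥ v = 0) : v = 0 := by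
  have h1 := LinearMap.finrank_range_add_finrank_ker W.mulVecLin
  rw [Module.finrank_fintype_fun_eq_card, Fintype.card_fin] at h1
  have h2 : Module.finrank ℂ (LinearMap.range W.mulVecLin) = n := h
  have hker : LinearMap.ker W.mulVecLin = ⊥ := Submodule.finrank_eq_zero.mp (by omega)
  have hmem : v ∈ LinearMap.ker W.mulVecLin := by
    rw [LinearMap.mem_ker, Matrix.mulVecLin_apply]
    exact hv
  rw [hker, Submodule.mem_bot] at hmem
  exact hmem

/-- If the pencil `φ(z) = M + z Mᵀ` is regular,
`M [U₁; U₂] = [V₁; V₂] A'` and `Mᵀ [U₁; U₂] = [V₁; V₂] B'` with `[U₁; U₂]` and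
`[V₁; V₂]` of rank n, and the pencil `α(z) = A' + z B'` is regular with
reciprocal-free spectrum, then `U₁` is invertible iff `V₂` is invertible. -/
theorem U1_invertible_iff_V2_invertible
    (n : ℕ) (M : Matrix (Fin n ⊕ Fin n) (Fin n ⊕ Fin n) ℂ)
    (hφ : PencilRegular M Mᵀ)
    (U₁ U₂ V₁ V₂ A' B' : Matrix (Fin n) (Fin n) ℂ)
    (hUrank : (Matrix.fromRows U₁ U₂).rank = n)
    (hVrank : (Matrix.fromRows V₁ V₂).rank = n)
    (hMU : M * Matrix.fromRows U₁ U₂ = Matrix.fromRows V₁ V₂ * A')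
    (hMTU : Mᵀ * Matrix.fromRows U₁ U₂ = Matrix.fromRows V₁ V₂ * B')
    (hreg : PencilRegular A' B') (hrf : PencilReciprocalFree A' B') :
    IsUnit U₁ ↔ IsUnit V₂ := by
  classical
  set U : Matrix (Fin n ⊕ Fin n) (Fin n) ℂ := Matrix.fromRows U₁ U₂ with hUdef
  set V : Matrix (Fin n ⊕ Fin n) (Fin n) ℂ := Matrix.fromRows V₁ V₂ with hVdef
  -- Derive K := Uᵀ V = 0
  have hK : Uᵀ * V = 0 := by
    apply K_eq_zero hreg hrf
    have e1 : Uᵀ * V * A' = Uᵀ * (M * U) := by rw [hMU, Matrix.mul_assoc]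
    have e2 : Uᵀ * V * B' = Uᵀ * (Mᵀ * U) := by rw [hMTU, Matrix.mul_assoc]
    have e3 : B'ᵀ * (Uᵀ * V)ᵀ = (Uᵀ * V * B')ᵀ := by
      simp [Matrix.transpose_mul, Matrix.mul_assoc]
    rw [e1, e3, e2]
    rw [Matrix.transpose_mul, Matrix.transpose_mul, Matrix.transpose_transpose,
      Matrix.transpose_transpose, Matrix.mul_assoc]
  rw [hUdef, hVdef, Matrix.transpose_fromRows, Matrix.fromCols_mul_fromRows] at hK
  -- hK : U₁ᵀ * V₁ + U₂ᵀ * V₂ = 0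
  have hKT : V₁ᵀ * U₁ + V₂ᵀ * U₂ = 0 := by
    have h := congrArg Matrix.transpose hK
    simpa [Matrix.transpose_add, Matrix.transpose_mul, Matrix.transpose_transpose,
      add_comm] using h
  have unit_of_inj : ∀ W : Matrix (Fin n) (Fin n) ℂ,
      (∀ v, W *ᵥ v = 0 → v = 0) → IsUnit W := by
    intro W hW
    rw [Matrix.isUnit_iff_isUnit_det, isUnit_iff_ne_zero]
    intro hdet
    obtain ⟨v, hvne, hv0⟩ := (Matrix.exists_mulVec_eq_zero_iff).mpr hdet
    exact hvne (hW v hv0)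
  have inj_of_unit : ∀ W : Matrix (Fin n) (Fin n) ℂ, IsUnit W →
      ∀ v, W *ᵥ v = 0 → v = 0 := by
    intro W hW v hv
    have hdet := (Matrix.isUnit_iff_isUnit_det W).mp hW
    have h := congrArg (fun u => W⁻¹ *ᵥ u) hv
    simpa [Matrix.mulVec_mulVec, Matrix.nonsing_inv_mul _ hdet] using h
  constructor
  · intro hU₁
    have hU₁T : IsUnit U₁ᵀ := by
      rw [Matrix.isUnit_iff_isUnit_det, Matrix.det_transpose,
        ← Matrix.isUnit_iff_isUnit_det]
      exact hU₁
    apply unit_of_inj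
    intro v hv
    have h0 : (U₁ᵀ * V₁ + U₂ᵀ * V₂) *ᵥ v = 0 := by rw [hK, Matrix.zero_mulVec]
    rw [Matrix.add_mulVec, ← Matrix.mulVec_mulVec, ← Matrix.mulVec_mulVec, hv,
      Matrix.mulVec_zero, add_zero] at h0
    have hV₁v : V₁ *ᵥ v = 0 := inj_of_unit U₁ᵀ hU₁T _ h0
    have hVv : Matrix.fromRows V₁ V₂ *ᵥ v = 0 := by
      rw [Matrix.fromRows_mulVec, hV₁v, hv]
      ext (i | i) <;> rfl
    exact mulVec_inj_of_rank _ hVrank hVv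
  · intro hV₂
    have hV₂T : IsUnit V₂ᵀ := by
      rw [Matrix.isUnit_iff_isUnit_det, Matrix.det_transpose,
        ← Matrix.isUnit_iff_isUnit_det]
      exact hV₂
    apply unit_of_inj
    intro x hx
    have h0 : (V₁ᵀ * U₁ + V₂ᵀ * U₂) *ᵥ x = 0 := by rw [hKT, Matrix.zero_mulVec]
    rw [Matrix.add_mulVec, ← Matrix.mulVec_mulVec, ← Matrix.mulVec_mulVec, hx,
      Matrix.mulVec_zero, zero_add] at h0
    have hU₂x : U₂ *ᵥ x = 0 := inj_of_unit V₂ᵀ hV₂T _ h0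
    have hUx : Matrix.fromRows U₁ U₂ *ᵥ x = 0 := by
      rw [Matrix.fromRows_mulVec, hx, hU₂x]
      ext (i | i) <;> rfl
    exact mulVec_inj_of_rank _ hUrank hUx
end

section
/- Let A, B, C, D ∈ ℝ^{n×n}, M = [[C, D],[A, −B]] ∈ ℝ^{2n×2n}, and suppose the pencil φ(z) = M + zMᵀ is regular. Let U₁, U₂, V₁, V₂, A', B' ∈ ℂ^{n×n} satisfy M·[U₁; U₂] = [V₁; V₂]·A' and Mᵀ·[U₁; U₂] = [V₁; V₂]·B', where [U₁; U₂] and [V₁; V₂] have rank n and the pencil α(z) = A' + zB' is regular with reciprocal-free spectrum. Suppose moreover that for every nonzero v ∈ ℂⁿ there exists z ∈ ℂ with vᵀ(B + zBᵀ)v ≠ 0. Then U₁ is invertible, and X = U₂U₁⁻¹ satisfies the ⊤-NARE, i.e., DX + XᵀA − XᵀBX + C = 0. -/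
open scoped Matrix

open Polynomial Module

section Aux

variable {n : ℕ}

/-- eval of charpoly. -/
lemma myEvalCharpoly (R : Matrix (Fin n) (Fin n) ℂ) (μ : ℂ) :
    (Matrix.charpoly R).eval μ = (μ • (1 : Matrix (Fin n) (Fin n) ℂ) - R).det := by
  rw [Matrix.charpoly, ← Polynomial.coe_evalRingHom, RingHom.map_det]
  congr 1
  ext i j
  by_cases h : i = j <;>
    simp [Matrix.charmatrix_apply, Matrix.one_apply, Matrix.diagonal_apply, h]

/-- Sylvester-type lemma. -/
lemma mySylvester (L R S : Matrix (Fin n) (Fin n) ℂ)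
    (h : L * S = S * R)
    (hdisj : ∀ μ : ℂ, (R - μ • 1).det = 0 → (L - μ • 1).det ≠ 0) : S = 0 := by
  have hpow : ∀ k : ℕ, L ^ k * S = S * R ^ k := by
    intro k
    induction k with
    | zero => simp
    | succ k ih =>
        rw [pow_succ, pow_succ, mul_assoc, h, ← mul_assoc, ih, mul_assoc]
  have hcomm : ∀ p : ℂ[X], Polynomial.aeval L p * S = S * Polynomial.aeval R p := by
    intro p
    induction p using Polynomial.induction_on' with
    | add p q hp hq => simp only [map_add, add_mul, mul_add, hp, hq]
    | monomial k a =>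
        simp only [Polynomial.aeval_monomial]
        calc algebraMap ℂ _ a * L ^ k * S = algebraMap ℂ _ a * (L ^ k * S) := by
              rw [mul_assoc]
          _ = algebraMap ℂ _ a * (S * R ^ k) := by rw [hpow]
          _ = (algebraMap ℂ _ a * S) * R ^ k := by rw [mul_assoc]
          _ = (S * algebraMap ℂ _ a) * R ^ k := by rw [Algebra.commutes]
          _ = S * (algebraMap ℂ _ a * R ^ k) := by rw [mul_assoc]
  set p := Matrix.charpoly R with hp
  have hzero : Polynomial.aeval L p * S = 0 := by
    rw [hcomm, Matrix.aeval_self_charpoly, mul_zero]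
  set l := p.roots.toList with hl
  have hsplit : p = (l.map fun μ => X - C μ).prod := by
    have h1 : p = (p.roots.map fun μ => X - C μ).prod :=
      Polynomial.Splits.eq_prod_roots_of_monic (IsAlgClosed.splits p)
        (Matrix.charpoly_monic R)
    have h2 : (Multiset.map (fun μ => X - C μ) p.roots).prod
        = (List.map (fun μ => X - C μ) p.roots.toList).prod := by
      conv_lhs => rw [← Multiset.coe_toList p.roots]
      rw [Multiset.map_coe, Multiset.prod_coe]
    rw [h1, h2, hl]
  have haeval : Polynomial.aeval L p
      = (l.map fun μ => L - μ • 1).prod := by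
    conv_lhs => rw [hsplit]
    rw [map_list_prod, List.map_map]
    congr 1
    ext μ
    simp [Function.comp, Algebra.algebraMap_eq_smul_one, sub_eq_add_neg]
  have hdet : (Polynomial.aeval L p).det ≠ 0 := by
    rw [haeval, ← Matrix.coe_detMonoidHom, map_list_prod, List.map_map]
    apply List.prod_ne_zero
    intro h0
    rw [List.mem_map] at h0
    obtain ⟨μ, hμ, hdet0⟩ := h0
    have hμ' : μ ∈ p.roots := by rw [hl] at hμ; exact (Multiset.mem_toList).1 hμ
    have hroot : (R - μ • 1).det = 0 := by
      have := Polynomial.isRoot_of_mem_roots hμ'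
      rw [Polynomial.IsRoot, myEvalCharpoly] at this
      rw [show R - μ • 1 = -(μ • (1 : Matrix (Fin n) (Fin n) ℂ) - R) from (neg_sub _ _).symm,
        Matrix.det_neg, this, mul_zero]
    exact hdisj μ hroot (by simpa using hdet0)
  have hunit : IsUnit (Polynomial.aeval L p) :=
    (Matrix.isUnit_iff_isUnit_det _).2 (isUnit_iff_ne_zero.2 hdet)
  calc S = (Polynomial.aeval L p)⁻¹ * (Polynomial.aeval L p * S) := by
        rw [← mul_assoc, Matrix.nonsing_inv_mul _ ((Matrix.isUnit_iff_isUnit_det _).1 hunit), one_mul]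
    _ = 0 := by rw [hzero, mul_zero]

/-- eval of pencil polynomial -/
lemma myPencilEval (A B : Matrix (Fin n) (Fin n) ℂ) (z : ℂ) :
    ((A.map C + (X : ℂ[X]) • B.map C).det).eval z = (A + z • B).det := by
  rw [← Polynomial.coe_evalRingHom, RingHom.map_det]
  congr 1
  ext i j
  simp only [RingHom.mapMatrix_apply, Matrix.map_apply, Matrix.add_apply, Matrix.smul_apply,
    smul_eq_mul, coe_evalRingHom, Polynomial.eval_add, Polynomial.eval_mul, Polynomial.eval_X,
    Polynomial.eval_C, Polynomial.eval_smul]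

lemma myNeutral (A' B' S : Matrix (Fin n) (Fin n) ℂ)
    (hreg : PencilRegular A' B') (hrf : PencilReciprocalFree A' B')
    (hS : A'ᵀ * S = Sᵀ * B') : S = 0 := by
  have hS2 : B'ᵀ * S = Sᵀ * A' := by
    have := congrArg Matrix.transpose hS
    simp only [Matrix.transpose_mul, Matrix.transpose_transpose] at this
    exact this.symm
  -- the two pencil polynomials
  set pA : ℂ[X] := (A'.map C + (X : ℂ[X]) • B'.map C).det with hpA
  set pB : ℂ[X] := (B'.map C + (X : ℂ[X]) • A'.map C).det with hpB
  have hpA0 : pA ≠ 0 := by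
    obtain ⟨z, hz⟩ := hreg
    intro h0
    apply hz
    rw [← myPencilEval, ← hpA, h0, Polynomial.eval_zero]
  -- a nonzero point where pA is nonzero
  obtain ⟨z₀, hz₀⟩ : ∃ z : ℂ, (pA * X).eval z ≠ 0 := by
    by_contra hc
    push_neg at hc
    exact mul_ne_zero hpA0 Polynomial.X_ne_zero (Polynomial.zero_of_eval_zero _ hc)
  rw [Polynomial.eval_mul, Polynomial.eval_X, mul_ne_zero_iff] at hz₀
  obtain ⟨hz₀A, hz₀ne⟩ := hz₀
  have hpB0 : pB ≠ 0 := by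
    intro h0
    have : pB.eval z₀⁻¹ = 0 := by rw [h0, Polynomial.eval_zero]
    rw [hpB, myPencilEval] at this
    have hBz : B' + z₀⁻¹ • A' = z₀⁻¹ • (A' + z₀ • B') := by
      rw [smul_add, smul_smul, inv_mul_cancel₀ hz₀ne, one_smul, add_comm]
    rw [hBz, Matrix.det_smul] at this
    rw [hpA, myPencilEval] at hz₀A
    rcases mul_eq_zero.1 this with h | h
    · exact pow_ne_zero _ (inv_ne_zero hz₀ne) h
    · exact hz₀A h
  -- choose z avoiding the bad set
  obtain ⟨z, hz⟩ : ∃ z : ℂ, (pA * pB * (X - 1) * (X + 1)).eval z ≠ 0 := by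
    by_contra hc
    push_neg at hc
    have := Polynomial.zero_of_eval_zero _ hc
    have hx1 : (X - 1 : ℂ[X]) ≠ 0 := by simpa using Polynomial.X_sub_C_ne_zero (1 : ℂ)
    have hx2 : (X + 1 : ℂ[X]) ≠ 0 := by
      simpa [sub_neg_eq_add] using Polynomial.X_sub_C_ne_zero (-1 : ℂ)
    exact (mul_ne_zero (mul_ne_zero (mul_ne_zero hpA0 hpB0) hx1) hx2) this
  simp only [Polynomial.eval_mul, Polynomial.eval_sub, Polynomial.eval_add, Polynomial.eval_X,
    Polynomial.eval_one, mul_ne_zero_iff] at hz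
  obtain ⟨⟨⟨hzA, hzB⟩, hz1⟩, hz2⟩ := hz
  rw [hpA, myPencilEval] at hzA
  rw [hpB, myPencilEval] at hzB
  set P := A' + z • B' with hPdef
  set Q := B' + z • A' with hQdef
  have hPu : IsUnit P := (Matrix.isUnit_iff_isUnit_det _).2 (isUnit_iff_ne_zero.2 hzA)
  have hQu : IsUnit Q := (Matrix.isUnit_iff_isUnit_det _).2 (isUnit_iff_ne_zero.2 hzB)
  have hPS : Pᵀ * S = Sᵀ * Q := by
    rw [hPdef, hQdef, Matrix.transpose_add, Matrix.transpose_smul, Matrix.add_mul,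
      Matrix.mul_add, Matrix.smul_mul, Matrix.mul_smul, hS, hS2]
  have hQS : Qᵀ * S = Sᵀ * P := by
    rw [hPdef, hQdef, Matrix.transpose_add, Matrix.transpose_smul, Matrix.add_mul,
      Matrix.mul_add, Matrix.smul_mul, Matrix.mul_smul, hS, hS2]
  have hQtu : IsUnit Qᵀ := (Matrix.isUnit_transpose Q).2 hQu
  have hPinv : P⁻¹ * P = 1 := Matrix.nonsing_inv_mul _ ((Matrix.isUnit_iff_isUnit_det _).1 hPu)
  have hPinv' : P * P⁻¹ = 1 := Matrix.mul_nonsing_inv _ ((Matrix.isUnit_iff_isUnit_det _).1 hPu)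
  have hQtinv : Qᵀ⁻¹ * Qᵀ = 1 := Matrix.nonsing_inv_mul _ ((Matrix.isUnit_iff_isUnit_det _).1 hQtu)
  have hLS : (Qᵀ⁻¹ * Pᵀ) * S = S * (P⁻¹ * Q) := by
    have h1 : Sᵀ = Qᵀ * S * P⁻¹ := by
      rw [hQS, Matrix.mul_assoc, hPinv', Matrix.mul_one]
    calc (Qᵀ⁻¹ * Pᵀ) * S = Qᵀ⁻¹ * (Pᵀ * S) := by rw [Matrix.mul_assoc]
      _ = Qᵀ⁻¹ * (Sᵀ * Q) := by rw [hPS]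
      _ = Qᵀ⁻¹ * (Qᵀ * S * P⁻¹ * Q) := by rw [← h1]
      _ = S * (P⁻¹ * Q) := by
          rw [← Matrix.mul_assoc, ← Matrix.mul_assoc, ← Matrix.mul_assoc, hQtinv, Matrix.one_mul,
            Matrix.mul_assoc]
  by_contra hS0
  -- get a shared eigenvalue
  have hshared : ∃ μ : ℂ, ((P⁻¹ * Q) - μ • 1).det = 0 ∧ ((Qᵀ⁻¹ * Pᵀ) - μ • 1).det = 0 := by
    by_contra hc
    push_neg at hc
    exact hS0 (mySylvester _ _ _ hLS (fun μ h1 h2 => (hc μ h1 h2).elim))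
  obtain ⟨μ, hμR, hμL⟩ := hshared
  -- translate to pencil determinants
  have hd1 : (Q - μ • P).det = 0 := by
    have hfact : Q - μ • P = P * (P⁻¹ * Q - μ • 1) := by
      rw [Matrix.mul_sub, Matrix.mul_smul, Matrix.mul_one, ← Matrix.mul_assoc, hPinv',
        Matrix.one_mul]
    rw [hfact, Matrix.det_mul, hμR, mul_zero]
  have hd2 : (P - μ • Q).det = 0 := by
    have hfact : (P - μ • Q)ᵀ = Qᵀ * (Qᵀ⁻¹ * Pᵀ - μ • 1) := by
      rw [Matrix.mul_sub, Matrix.mul_smul, Matrix.mul_one, ← Matrix.mul_assoc,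
        Matrix.mul_nonsing_inv _ ((Matrix.isUnit_iff_isUnit_det _).1 hQtu), Matrix.one_mul,
        Matrix.transpose_sub, Matrix.transpose_smul]
    rw [← Matrix.det_transpose, hfact, Matrix.det_mul, hμL, mul_zero]
  -- rewrite as pencil combinations
  have he1 : Q - μ • P = (z - μ) • A' + (1 - μ * z) • B' := by
    rw [hPdef, hQdef]
    rw [sub_smul, sub_smul, smul_add, smul_smul, one_smul]
    abel
  have he2 : P - μ • Q = (1 - μ * z) • A' + (z - μ) • B' := by
    rw [hPdef, hQdef]
    rw [sub_smul, sub_smul, smul_add, smul_smul, one_smul]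
    abel
  rw [he1] at hd1
  rw [he2] at hd2
  set a : ℂ := 1 - μ * z with ha
  set b : ℂ := z - μ with hb
  by_cases hbz : b = 0
  · by_cases haz : a = 0
    · -- z * z = 1, contradicting z ≠ ± 1
      have hzz : z * z = 1 := by
        have hμz : μ = z := by rw [hb] at hbz; linear_combination -hbz
        rw [ha, hμz] at haz
        linear_combination -haz
      rcases mul_self_eq_one_iff.1 hzz with h | h
      · exact hz1 (by rw [h]; ring)
      · exact hz2 (by rw [h]; ring)
    · -- det A' = det B' = 0
      refine hrf.2 ⟨?_, ?_⟩
      · rw [hbz, zero_smul, add_zero, Matrix.det_smul] at hd2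
        exact (mul_eq_zero.1 hd2).resolve_left (pow_ne_zero _ haz)
      · rw [hbz, zero_smul, zero_add, Matrix.det_smul] at hd1
        exact (mul_eq_zero.1 hd1).resolve_left (pow_ne_zero _ haz)
  · by_cases haz : a = 0
    · refine hrf.2 ⟨?_, ?_⟩
      · rw [haz, zero_smul, add_zero, Matrix.det_smul] at hd1
        exact (mul_eq_zero.1 hd1).resolve_left (pow_ne_zero _ hbz)
      · rw [haz, zero_smul, zero_add, Matrix.det_smul] at hd2
        exact (mul_eq_zero.1 hd2).resolve_left (pow_ne_zero _ hbz)
    · -- reciprocal pair a/b and b/a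
      refine hrf.1 ⟨a / b, b / a, ?_, ?_, ?_⟩
      · field_simp
      · have hfact : b • A' + a • B' = b • (A' + (a / b) • B') := by
          rw [smul_add, smul_smul, mul_div_cancel₀ _ hbz]
        rw [hfact, Matrix.det_smul] at hd1
        exact (mul_eq_zero.1 hd1).resolve_left (pow_ne_zero _ hbz)
      · have hfact : a • A' + b • B' = a • (A' + (b / a) • B') := by
          rw [smul_add, smul_smul, mul_div_cancel₀ _ haz]
        rw [hfact, Matrix.det_smul] at hd2
        exact (mul_eq_zero.1 hd2).resolve_left (pow_ne_zero _ haz)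

lemma myDP (M : Matrix (Fin n) (Fin n) ℂ) (u v : Fin n → ℂ) :
    (M *ᵥ u) ⬝ᵥ v = u ⬝ᵥ (Mᵀ *ᵥ v) := by
  rw [Matrix.dotProduct_mulVec, Matrix.vecMul_transpose]

end Aux

/-- sufficient condition for the invertibility of `U₁`.  With
`M = [[C, D], [A, -B]]` (viewed over ℂ), a deflating subspace spanned by `[U₁; U₂]`
associated with a reciprocal-free set of eigenvalues, and the condition that for every
nonzero `v` there is `z` with `vᵀ (B + z Bᵀ) v ≠ 0`, the matrix `U₁` is invertible and
`X = U₂ U₁⁻¹` solves the ⊤-NARE `D X + Xᵀ A − Xᵀ B X + C = 0`. -/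
theorem U1_invertible_and_tNARE_solvable
    (n : ℕ) (A B C D : Matrix (Fin n) (Fin n) ℝ) :
    ∀ Ac Bc Cc Dc : Matrix (Fin n) (Fin n) ℂ,
      Ac = A.map (Complex.ofReal ·) → Bc = B.map (Complex.ofReal ·) →
      Cc = C.map (Complex.ofReal ·) → Dc = D.map (Complex.ofReal ·) →
      ∀ M : Matrix (Fin n ⊕ Fin n) (Fin n ⊕ Fin n) ℂ,
        M = Matrix.fromBlocks Cc Dc Ac (-Bc) →
        PencilRegular M Mᵀ →
        ∀ U₁ U₂ V₁ V₂ A' B' : Matrix (Fin n) (Fin n) ℂ,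
          (Matrix.fromRows U₁ U₂).rank = n →
          (Matrix.fromRows V₁ V₂).rank = n →
          M * Matrix.fromRows U₁ U₂ = Matrix.fromRows V₁ V₂ * A' →
          Mᵀ * Matrix.fromRows U₁ U₂ = Matrix.fromRows V₁ V₂ * B' →
          PencilRegular A' B' → PencilReciprocalFree A' B' →
          (∀ v : Fin n → ℂ, v ≠ 0 → ∃ z : ℂ, v ⬝ᵥ (Bc + z • Bcᵀ) *ᵥ v ≠ 0) →
          IsUnit U₁ ∧
            Dc * (U₂ * U₁⁻¹) + (U₂ * U₁⁻¹)ᵀ * Ac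
              - (U₂ * U₁⁻¹)ᵀ * Bc * (U₂ * U₁⁻¹) + Cc = 0 := by
  intro Ac Bc Cc Dc hA hB hC hD M hM hMreg U₁ U₂ V₁ V₂ A' B' hrkU hrkV hMU hMtU hreg hrf hcond
  clear hA hB hC hD hMreg hrkV
  -- block equations
  rw [hM, Matrix.fromBlocks_mul_fromRows, Matrix.fromRows_mul] at hMU
  obtain ⟨e1, e2⟩ := Matrix.fromRows_inj hMU
  rw [hM, Matrix.fromBlocks_transpose, Matrix.fromBlocks_mul_fromRows,
    Matrix.fromRows_mul] at hMtU
  obtain ⟨e3, e4⟩ := Matrix.fromRows_inj hMtU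
  -- the matrix S = Vᵀ U and its neutrality
  set S : Matrix (Fin n) (Fin n) ℂ := V₁ᵀ * U₁ + V₂ᵀ * U₂ with hSdef
  have hkey : A'ᵀ * S = Sᵀ * B' := by
    have lhs : A'ᵀ * S = (Cc * U₁ + Dc * U₂)ᵀ * U₁ + (Ac * U₁ + (-Bc) * U₂)ᵀ * U₂ := by
      rw [e1, e2, hSdef, Matrix.mul_add, ← Matrix.mul_assoc, ← Matrix.mul_assoc,
        ← Matrix.transpose_mul, ← Matrix.transpose_mul]
    have rhs : Sᵀ * B' = U₁ᵀ * (Ccᵀ * U₁ + Acᵀ * U₂) + U₂ᵀ * (Dcᵀ * U₁ + (-Bc)ᵀ * U₂) := by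
      rw [e3, e4, hSdef, Matrix.transpose_add, Matrix.transpose_mul, Matrix.transpose_mul,
        Matrix.transpose_transpose, Matrix.transpose_transpose, Matrix.add_mul,
        Matrix.mul_assoc, Matrix.mul_assoc]
    rw [lhs, rhs]
    simp only [Matrix.transpose_add, Matrix.transpose_mul, Matrix.transpose_transpose,
      Matrix.transpose_neg, Matrix.neg_mul, Matrix.mul_neg, Matrix.add_mul, Matrix.mul_add,
      Matrix.mul_assoc]
    abel
  have hS0 : S = 0 := myNeutral A' B' S hreg hrf hkey
  -- injectivity of [U₁; U₂]
  have hinj : ∀ v : Fin n → ℂ, Matrix.fromRows U₁ U₂ *ᵥ v = 0 → v = 0 := by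
    intro v hv
    have hker : LinearMap.ker (Matrix.fromRows U₁ U₂).mulVecLin = ⊥ := by
      have hrn := LinearMap.finrank_range_add_finrank_ker (Matrix.fromRows U₁ U₂).mulVecLin
      rw [Module.finrank_fin_fun] at hrn
      have hr : finrank ℂ (LinearMap.range (Matrix.fromRows U₁ U₂).mulVecLin) = n := hrkU
      rw [hr] at hrn
      have : finrank ℂ (LinearMap.ker (Matrix.fromRows U₁ U₂).mulVecLin) = 0 := by omega
      exact Submodule.finrank_eq_zero.1 this
    have : v ∈ LinearMap.ker (Matrix.fromRows U₁ U₂).mulVecLin := by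
      rw [LinearMap.mem_ker, Matrix.mulVecLin_apply, hv]
    rwa [hker, Submodule.mem_bot] at this
  -- U₁ is invertible
  have hU1 : IsUnit U₁ := by
    by_contra hns
    have hdet : U₁.det = 0 := by
      by_contra hd
      exact hns ((Matrix.isUnit_iff_isUnit_det _).2 (isUnit_iff_ne_zero.2 hd))
    obtain ⟨v, hv0, hv⟩ := (Matrix.exists_mulVec_eq_zero_iff).2 hdet
    set w : Fin n → ℂ := U₂ *ᵥ v with hwdef
    have hw0 : w ≠ 0 := by
      intro hw
      apply hv0
      apply hinj
      rw [Matrix.fromRows_mulVec, hv, ← hwdef, hw]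
      ext (i | i) <;> simp
    -- from S = 0 : U₂ᵀ * V₂ = -(U₁ᵀ * V₁)
    have hUV : U₂ᵀ * V₂ = -(U₁ᵀ * V₁) := by
      have := congrArg Matrix.transpose hS0
      simp only [hSdef, Matrix.transpose_add, Matrix.transpose_mul, Matrix.transpose_transpose,
        Matrix.transpose_zero] at this
      linear_combination (norm := noncomm_ring) this
    -- quadratic form identities
    have hBU : Bc * U₂ = Ac * U₁ - V₂ * A' := by
      linear_combination (norm := noncomm_ring) -e2
    have hBtU : Bcᵀ * U₂ = Dcᵀ * U₁ - V₂ * B' := by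
      have e4' := e4
      rw [Matrix.transpose_neg, Matrix.neg_mul] at e4'
      linear_combination (norm := noncomm_ring) -e4'
    have c1 : w ⬝ᵥ Bc *ᵥ w = 0 := by
      rw [hwdef, myDP, Matrix.mulVec_mulVec, Matrix.mulVec_mulVec, Matrix.mul_assoc, hBU]
      have hfac : U₂ᵀ * (Ac * U₁ - V₂ * A') = (U₂ᵀ * Ac) * U₁ + U₁ᵀ * (V₁ * A') := by
        rw [Matrix.mul_sub]
        have : U₂ᵀ * (V₂ * A') = -(U₁ᵀ * (V₁ * A')) := by
          rw [← Matrix.mul_assoc, hUV, ← Matrix.mul_assoc, Matrix.neg_mul]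
        rw [this, Matrix.mul_assoc]
        abel
      rw [hfac, Matrix.add_mulVec, dotProduct_add, ← Matrix.mulVec_mulVec, hv,
        Matrix.mulVec_zero, dotProduct_zero, zero_add, ← Matrix.mulVec_mulVec, ← myDP, hv,
        zero_dotProduct]
    have c2 : w ⬝ᵥ Bcᵀ *ᵥ w = 0 := by
      rw [hwdef, myDP, Matrix.mulVec_mulVec, Matrix.mulVec_mulVec, Matrix.mul_assoc, hBtU]
      have hfac : U₂ᵀ * (Dcᵀ * U₁ - V₂ * B') = (U₂ᵀ * Dcᵀ) * U₁ + U₁ᵀ * (V₁ * B') := by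
        rw [Matrix.mul_sub]
        have : U₂ᵀ * (V₂ * B') = -(U₁ᵀ * (V₁ * B')) := by
          rw [← Matrix.mul_assoc, hUV, ← Matrix.mul_assoc, Matrix.neg_mul]
        rw [this, Matrix.mul_assoc]
        abel
      rw [hfac, Matrix.add_mulVec, dotProduct_add, ← Matrix.mulVec_mulVec, hv,
        Matrix.mulVec_zero, dotProduct_zero, zero_add, ← Matrix.mulVec_mulVec, ← myDP, hv,
        zero_dotProduct]
    obtain ⟨z, hz⟩ := hcond w hw0
    apply hz
    rw [Matrix.add_mulVec, Matrix.smul_mulVec, dotProduct_add,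
      dotProduct_smul, c1, c2, smul_zero, add_zero]
  refine ⟨hU1, ?_⟩
  -- the residual is zero
  have hdetU1 : IsUnit U₁.det := (Matrix.isUnit_iff_isUnit_det _).1 hU1
  have hinv : U₁⁻¹ * U₁ = 1 := Matrix.nonsing_inv_mul _ hdetU1
  have hinv' : U₁ * U₁⁻¹ = 1 := Matrix.mul_nonsing_inv _ hdetU1
  set Xm : Matrix (Fin n) (Fin n) ℂ := U₂ * U₁⁻¹ with hXdef
  have hXU : Xm * U₁ = U₂ := by rw [hXdef, Matrix.mul_assoc, hinv, Matrix.mul_one]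
  have hUX : U₁ᵀ * Xmᵀ = U₂ᵀ := by rw [← Matrix.transpose_mul, hXU]
  set G : Matrix (Fin n) (Fin n) ℂ := Dc * Xm + Xmᵀ * Ac - Xmᵀ * Bc * Xm + Cc with hGdef
  have key2 : U₁ᵀ * G * U₁ = U₁ᵀ * (Cc * U₁ + Dc * U₂) + U₂ᵀ * (Ac * U₁ + (-Bc) * U₂) := by
    rw [hGdef, ← hXU]
    simp only [Matrix.transpose_mul]
    noncomm_ring
  have key3 : U₁ᵀ * G * U₁ = 0 := by
    rw [key2, e1, e2]
    have : U₁ᵀ * (V₁ * A') + U₂ᵀ * (V₂ * A') = Sᵀ * A' := by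
      rw [hSdef, Matrix.transpose_add, Matrix.transpose_mul, Matrix.transpose_mul,
        Matrix.transpose_transpose, Matrix.transpose_transpose, Matrix.add_mul,
        Matrix.mul_assoc, Matrix.mul_assoc]
    rw [this, hS0, Matrix.transpose_zero, Matrix.zero_mul]
  have hU1t : IsUnit U₁ᵀ := (Matrix.isUnit_transpose U₁).2 hU1
  have hinvt : U₁ᵀ⁻¹ * U₁ᵀ = 1 :=
    Matrix.nonsing_inv_mul _ ((Matrix.isUnit_iff_isUnit_det _).1 hU1t)
  have hGU : G * U₁ = 0 := by
    have h := congrArg (fun Y => U₁ᵀ⁻¹ * Y) key3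
    simpa [← Matrix.mul_assoc, hinvt] using h
  have hG : G = 0 := by
    have h := congrArg (fun Y => Y * U₁⁻¹) hGU
    simpa [Matrix.mul_assoc, hinv'] using h
  exact hG
end

section
/- Let A, B, C, D ∈ ℝ^{n×n}, M = [[C, D],[A, −B]] ∈ ℝ^{2n×2n}, and suppose the pencil φ(z) = M + zMᵀ is regular. Let U₁, U₂, V₁, V₂, A', B' ∈ ℂ^{n×n} satisfy M·[U₁; U₂] = [V₁; V₂]·A' and Mᵀ·[U₁; U₂] = [V₁; V₂]·B', where [U₁; U₂] and [V₁; V₂] have rank n and the pencil α(z) = A' + zB' is regular with reciprocal-free spectrum. If U₁ is invertible, then for every z ∈ ℂ with det(A' + zB') ≠ 0 the n×2n matrix [A + zDᵀ, −B − zBᵀ] (horizontal concatenation) has rank n. -/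
open scoped Matrix

namespace Stmt9Aux
open Polynomial Module

lemma rank_eq_of_vecMul_inj {n : ℕ} (N : Matrix (Fin n) (Fin n ⊕ Fin n) ℂ)
    (h : ∀ y : Fin n → ℂ, y ᵥ* N = 0 → y = 0) : N.rank = n := by
  rw [← Matrix.rank_transpose]
  have hinj : Function.Injective Nᵀ.mulVecLin := by
    rw [← LinearMap.ker_eq_bot, LinearMap.ker_eq_bot']
    intro x hx
    exact h x (by rwa [Matrix.mulVecLin_apply, Matrix.mulVec_transpose] at hx)
  rw [Matrix.rank, LinearMap.finrank_range_of_inj hinj]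
  simp

lemma exists_complement {n : ℕ} (U : Matrix (Fin n ⊕ Fin n) (Fin n) ℂ) (hU : U.rank = n) :
    ∃ U' : Matrix (Fin n ⊕ Fin n) (Fin n) ℂ, IsUnit (Matrix.fromCols U U') := by
  set S := LinearMap.range U.mulVecLin with hS
  obtain ⟨S', hS'⟩ := Submodule.exists_isCompl S
  have hfin : finrank ℂ S' = n := by
    have h1 := Submodule.finrank_add_eq_of_isCompl hS'
    have h2 : finrank ℂ S = n := hU
    have h3 : finrank ℂ ((Fin n ⊕ Fin n) → ℂ) = n + n := by simp
    omega
  let b : Basis (Fin n) ℂ S' := (Module.finBasis ℂ S').reindex (finCongr hfin)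
  refine ⟨Matrix.of (fun i j => (b j : (Fin n ⊕ Fin n) → ℂ) i), ?_⟩
  rw [← Matrix.mulVec_surjective_iff_isUnit]
  intro v
  have hv : v ∈ S ⊔ S' := by rw [hS'.sup_eq_top]; trivial
  obtain ⟨s, hs, s', hs', rfl⟩ := Submodule.mem_sup.mp hv
  obtain ⟨x, rfl⟩ := hs
  refine ⟨Sum.elim x (b.repr ⟨s', hs'⟩), ?_⟩
  rw [Matrix.fromCols_mulVec_sumElim]
  congr 1
  have hsum := congrArg (Subtype.val) (b.sum_repr ⟨s', hs'⟩)
  funext i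
  simp only [Submodule.coe_sum] at hsum ⊢
  rw [show s' i = _ from (congrFun hsum i).symm]
  simp [Matrix.mulVec, dotProduct, mul_comm]

lemma evalPencilDet {m : Type*} [Fintype m] [DecidableEq m] (P Q : Matrix m m ℂ) (z : ℂ) :
    ((P.map Polynomial.C + (X : ℂ[X]) • Q.map Polynomial.C).det).eval z = (P + z • Q).det := by
  have h1 : Polynomial.eval z ((P.map Polynomial.C + (X : ℂ[X]) • Q.map Polynomial.C).det)
      = ((P.map Polynomial.C + (X : ℂ[X]) • Q.map Polynomial.C).map
          (Polynomial.evalRingHom z)).det :=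
    RingHom.map_det (Polynomial.evalRingHom z) _
  rw [h1]
  congr 1
  ext i j
  simp [Matrix.map_apply]
  ring

lemma detPencilRev {m : Type*} [Fintype m] [DecidableEq m] (P Q : Matrix m m ℂ) (z : ℂ)
    (hz : z ≠ 0) : (P + z • Q).det = z ^ (Fintype.card m) * (Q + z⁻¹ • P).det := by
  rw [← Matrix.det_smul]
  congr 1
  rw [smul_add, smul_smul, mul_inv_cancel₀ hz, one_smul, add_comm]

end Stmt9Aux

/-- necessary condition for the invertibility of `U₁`.  With
`M = [[C, D], [A, -B]]` (viewed over ℂ) and a deflating subspace spanned by `[U₁; U₂]`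
associated with a reciprocal-free set of eigenvalues (the spectrum of `A' + z B'`),
if `U₁` is invertible then for every `z` outside that spectrum the matrix
`[A + z Dᵀ, −B − z Bᵀ]` has rank n. -/
theorem necessary_condition_U1_invertible
    (n : ℕ) (A B C D : Matrix (Fin n) (Fin n) ℝ) :
    ∀ Ac Bc Cc Dc : Matrix (Fin n) (Fin n) ℂ,
      Ac = A.map (Complex.ofReal ·) → Bc = B.map (Complex.ofReal ·) →
      Cc = C.map (Complex.ofReal ·) → Dc = D.map (Complex.ofReal ·) →
      ∀ M : Matrix (Fin n ⊕ Fin n) (Fin n ⊕ Fin n) ℂ,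
        M = Matrix.fromBlocks Cc Dc Ac (-Bc) →
        PencilRegular M Mᵀ →
        ∀ U₁ U₂ V₁ V₂ A' B' : Matrix (Fin n) (Fin n) ℂ,
          (Matrix.fromRows U₁ U₂).rank = n →
          (Matrix.fromRows V₁ V₂).rank = n →
          M * Matrix.fromRows U₁ U₂ = Matrix.fromRows V₁ V₂ * A' →
          Mᵀ * Matrix.fromRows U₁ U₂ = Matrix.fromRows V₁ V₂ * B' →
          PencilRegular A' B' → PencilReciprocalFree A' B' →
          IsUnit U₁ →
          ∀ z : ℂ, (A' + z • B').det ≠ 0 →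
            (Matrix.fromCols (Ac + z • Dcᵀ) (-Bc - z • Bcᵀ)).rank = n := by
  intro Ac Bc Cc Dc hAc hBc hCc hDc M hM hregM U₁ U₂ V₁ V₂ A' B' hrkU hrkV hMU hMtU
    hregα hrf hU₁ z hz
  classical
  set U : Matrix (Fin n ⊕ Fin n) (Fin n) ℂ := Matrix.fromRows U₁ U₂ with hU
  set V : Matrix (Fin n ⊕ Fin n) (Fin n) ℂ := Matrix.fromRows V₁ V₂ with hV
  obtain ⟨U', hWu⟩ := Stmt9Aux.exists_complement U hrkU
  obtain ⟨V', hYu⟩ := Stmt9Aux.exists_complement V hrkV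
  set W : Matrix (Fin n ⊕ Fin n) (Fin n ⊕ Fin n) ℂ := Matrix.fromCols U U' with hWdef
  set Y : Matrix (Fin n ⊕ Fin n) (Fin n ⊕ Fin n) ℂ := Matrix.fromCols V V' with hYdef
  have hWdet : IsUnit W.det := (Matrix.isUnit_iff_isUnit_det W).mp hWu
  have hYdet : IsUnit Y.det := (Matrix.isUnit_iff_isUnit_det Y).mp hYu
  set G : Matrix (Fin n) (Fin n) ℂ := Matrix.toRows₁ (Y⁻¹ * (M * U')) with hG
  set H : Matrix (Fin n) (Fin n) ℂ := Matrix.toRows₂ (Y⁻¹ * (M * U')) with hH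
  set G' : Matrix (Fin n) (Fin n) ℂ := Matrix.toRows₁ (Y⁻¹ * (Mᵀ * U')) with hG'
  set H' : Matrix (Fin n) (Fin n) ℂ := Matrix.toRows₂ (Y⁻¹ * (Mᵀ * U')) with hH'
  have hMU' : M * U' = Y * Matrix.fromRows G H := by
    rw [hG, hH, Matrix.fromRows_toRows, Matrix.mul_nonsing_inv_cancel_left _ _ hYdet]
  have hMtU' : Mᵀ * U' = Y * Matrix.fromRows G' H' := by
    rw [hG', hH', Matrix.fromRows_toRows, Matrix.mul_nonsing_inv_cancel_left _ _ hYdet]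
  have hYV : Y * Matrix.fromRows A' (0 : Matrix (Fin n) (Fin n) ℂ) = V * A' := by
    rw [hYdef, Matrix.fromCols_mul_fromRows, Matrix.mul_zero, add_zero]
  have hYV' : Y * Matrix.fromRows B' (0 : Matrix (Fin n) (Fin n) ℂ) = V * B' := by
    rw [hYdef, Matrix.fromCols_mul_fromRows, Matrix.mul_zero, add_zero]
  have hE1 : M * W = Y * Matrix.fromBlocks A' G 0 H := by
    rw [hWdef, Matrix.mul_fromCols, ← Matrix.fromCols_fromRows_eq_fromBlocks,
      Matrix.mul_fromCols]
    rw [hMU, hMU', hYV]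
  have hE2 : Mᵀ * W = Y * Matrix.fromBlocks B' G' 0 H' := by
    rw [hWdef, Matrix.mul_fromCols, ← Matrix.fromCols_fromRows_eq_fromBlocks,
      Matrix.mul_fromCols]
    rw [hMtU, hMtU', hYV']
  -- polynomial pencils
  let CC : ℂ →+* Polynomial ℂ := Polynomial.C
  let pa : Polynomial ℂ := (A'.map CC + (Polynomial.X : Polynomial ℂ) • B'.map CC).det
  let pat : Polynomial ℂ := (B'.map CC + (Polynomial.X : Polynomial ℂ) • A'.map CC).det
  let pd : Polynomial ℂ := (H.map CC + (Polynomial.X : Polynomial ℂ) • H'.map CC).det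
  let pdt : Polynomial ℂ := (H'.map CC + (Polynomial.X : Polynomial ℂ) • H.map CC).det
  let pp : Polynomial ℂ := (M.map CC + (Polynomial.X : Polynomial ℂ) • Mᵀ.map CC).det
  let ppt : Polynomial ℂ := (Mᵀ.map CC + (Polynomial.X : Polynomial ℂ) • M.map CC).det
  have mapmul : ∀ (P Q : Matrix (Fin n ⊕ Fin n) (Fin n ⊕ Fin n) ℂ),
      (P * Q).map CC = P.map CC * Q.map CC := by
    intro P Q
    exact Matrix.map_mul
  have hE1c : M.map CC * W.map CC
      = Y.map CC * Matrix.fromBlocks (A'.map CC) (G.map CC) 0 (H.map CC) := by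
    have := congrArg (fun (P : Matrix (Fin n ⊕ Fin n) (Fin n ⊕ Fin n) ℂ) => P.map CC) hE1
    simpa [mapmul, Matrix.fromBlocks_map] using this
  have hE2c : Mᵀ.map CC * W.map CC
      = Y.map CC * Matrix.fromBlocks (B'.map CC) (G'.map CC) 0 (H'.map CC) := by
    have := congrArg (fun (P : Matrix (Fin n ⊕ Fin n) (Fin n ⊕ Fin n) ℂ) => P.map CC) hE2
    simpa [mapmul, Matrix.fromBlocks_map] using this
  have hpencil1 : (M.map CC + (Polynomial.X : Polynomial ℂ) • Mᵀ.map CC) * W.map CC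
      = Y.map CC * Matrix.fromBlocks (A'.map CC + (Polynomial.X : Polynomial ℂ) • B'.map CC)
          (G.map CC + (Polynomial.X : Polynomial ℂ) • G'.map CC) 0 (H.map CC + (Polynomial.X : Polynomial ℂ) • H'.map CC) := by
    rw [add_mul, Matrix.smul_mul, hE1c, hE2c, ← Matrix.mul_smul, ← Matrix.mul_add]
    congr 1
    rw [Matrix.fromBlocks_smul, Matrix.fromBlocks_add]
    congr 1 <;> simp
  have hpencil2 : (Mᵀ.map CC + (Polynomial.X : Polynomial ℂ) • M.map CC) * W.map CC
      = Y.map CC * Matrix.fromBlocks (B'.map CC + (Polynomial.X : Polynomial ℂ) • A'.map CC)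
          (G'.map CC + (Polynomial.X : Polynomial ℂ) • G.map CC) 0 (H'.map CC + (Polynomial.X : Polynomial ℂ) • H.map CC) := by
    rw [add_mul, Matrix.smul_mul, hE1c, hE2c, ← Matrix.mul_smul, ← Matrix.mul_add]
    congr 1
    rw [Matrix.fromBlocks_smul, Matrix.fromBlocks_add]
    congr 1 <;> simp
  have hfac1 : pp * Polynomial.C W.det = Polynomial.C Y.det * (pa * pd) := by
    have := congrArg Matrix.det hpencil1
    rw [Matrix.det_mul, Matrix.det_mul, Matrix.det_fromBlocks_zero₂₁] at this
    rw [show (W.map CC).det = Polynomial.C W.det from (RingHom.map_det CC W).symm,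
      show (Y.map CC).det = Polynomial.C Y.det from (RingHom.map_det CC Y).symm] at this
    exact this
  have hfac2 : ppt * Polynomial.C W.det = Polynomial.C Y.det * (pat * pdt) := by
    have := congrArg Matrix.det hpencil2
    rw [Matrix.det_mul, Matrix.det_mul, Matrix.det_fromBlocks_zero₂₁] at this
    rw [show (W.map CC).det = Polynomial.C W.det from (RingHom.map_det CC W).symm,
      show (Y.map CC).det = Polynomial.C Y.det from (RingHom.map_det CC Y).symm] at this
    exact this
  have hppt : pp = ppt := by
    show (M.map CC + (Polynomial.X : Polynomial ℂ) • Mᵀ.map CC).det = _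
    rw [← Matrix.det_transpose (M.map CC + (Polynomial.X : Polynomial ℂ) • Mᵀ.map CC)]
    congr 1
  have hprod : pa * pd = pat * pdt := by
    have h1 : Polynomial.C Y.det * (pa * pd) = Polynomial.C Y.det * (pat * pdt) := by
      rw [← hfac1, ← hfac2, hppt]
    exact mul_left_cancel₀ (by simpa using hYdet.ne_zero) h1
  -- evaluation facts
  have heva : ∀ w : ℂ, pa.eval w = (A' + w • B').det := fun w => Stmt9Aux.evalPencilDet A' B' w
  have hevat : ∀ w : ℂ, pat.eval w = (B' + w • A').det := fun w => Stmt9Aux.evalPencilDet B' A' w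
  have hevd : ∀ w : ℂ, pd.eval w = (H + w • H').det := fun w => Stmt9Aux.evalPencilDet H H' w
  have hevdt : ∀ w : ℂ, pdt.eval w = (H' + w • H).det := fun w => Stmt9Aux.evalPencilDet H' H w
  have hevp : ∀ w : ℂ, pp.eval w = (M + w • Mᵀ).det := fun w => Stmt9Aux.evalPencilDet M Mᵀ w
  have hpa : pa ≠ 0 := by
    obtain ⟨z0, hz0⟩ := hregα
    intro h0
    exact hz0 (by rw [← heva z0, h0, Polynomial.eval_zero])
  have hpp : pp ≠ 0 := by
    obtain ⟨z0, hz0⟩ := hregM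
    intro h0
    exact hz0 (by rw [← hevp z0, h0, Polynomial.eval_zero])
  have hCW : (Polynomial.C W.det : Polynomial ℂ) ≠ 0 := by
    simpa using hWdet.ne_zero
  have hpapd : pa * pd ≠ 0 := by
    intro h0
    exact mul_ne_zero hpp hCW (by rw [hfac1, h0, mul_zero])
  have hpatpdt : pat * pdt ≠ 0 := by rw [← hprod]; exact hpapd
  have hpd : pd ≠ 0 := fun h0 => hpapd (by rw [h0, mul_zero])
  have hpat : pat ≠ 0 := fun h0 => hpatpdt (by rw [h0, zero_mul])
  -- coprimality
  have hcop : IsCoprime pa pat := by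
    refine (Polynomial.isCoprime_iff_aeval_ne_zero_of_isAlgClosed (k := ℂ) (K := ℂ) pa pat).mpr ?_
    intro w
    by_contra hw
    push_neg at hw
    obtain ⟨hw1, hw2⟩ := hw
    simp only [Polynomial.aeval_def, Polynomial.eval₂_eq_eval_map, Polynomial.map_id,
      Algebra.algebraMap_self] at hw1 hw2
    rw [heva] at hw1
    rw [hevat] at hw2
    rcases eq_or_ne w 0 with rfl | hw0
    · refine hrf.2 ⟨?_, ?_⟩
      · simpa using hw1
      · simpa using hw2
    · refine hrf.1 ⟨w, w⁻¹, mul_inv_cancel₀ hw0, hw1, ?_⟩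
      rw [Stmt9Aux.detPencilRev B' A' w hw0] at hw2
      exact (mul_eq_zero.mp hw2).resolve_left (pow_ne_zero _ hw0)
  have hdvd : pat ∣ pd := (hcop.symm).dvd_of_dvd_mul_left ⟨pdt, hprod⟩
  obtain ⟨q, hq⟩ := hdvd
  have hqne : q ≠ 0 := fun h0 => hpd (by rw [hq, h0, mul_zero])
  have hqdt : pdt = pa * q := by
    have : pat * pdt = pat * (pa * q) := by
      rw [← hprod, hq]; ring
    exact mul_left_cancel₀ hpat this
  -- reversal identities
  have hrevA : ∀ w : ℂ, w ≠ 0 → pat.eval w = w ^ n * pa.eval w⁻¹ := by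
    intro w hw
    rw [hevat, heva, Stmt9Aux.detPencilRev B' A' w hw, Fintype.card_fin]
  have hrevD : ∀ w : ℂ, w ≠ 0 → pdt.eval w = w ^ n * pd.eval w⁻¹ := by
    intro w hw
    rw [hevdt, hevd, Stmt9Aux.detPencilRev H' H w hw, Fintype.card_fin]
  have hqq : ∀ w : ℂ, w ≠ 0 → pa.eval w ≠ 0 → q.eval w = q.eval w⁻¹ := by
    intro w hw hwa
    have h3 : (w:ℂ) ^ n * pat.eval w⁻¹ = pa.eval w := by
      rw [hrevA w⁻¹ (inv_ne_zero hw), inv_inv, ← mul_assoc, ← mul_pow,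
        mul_inv_cancel₀ hw, one_pow, one_mul]
    have h1 : pa.eval w * q.eval w = pa.eval w * q.eval w⁻¹ := by
      calc pa.eval w * q.eval w = pdt.eval w := by rw [hqdt, Polynomial.eval_mul]
        _ = w ^ n * (pat.eval w⁻¹ * q.eval w⁻¹) := by
            rw [hrevD w hw, hq, Polynomial.eval_mul]
        _ = pa.eval w * q.eval w⁻¹ := by rw [← mul_assoc, h3]
    exact mul_left_cancel₀ hwa h1
  -- q is a nonzero constant
  have hqdeg : q.natDegree = 0 := by
    by_contra hk
    have hkpos : 0 < q.natDegree := Nat.pos_of_ne_zero hk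
    set k := q.natDegree with hkdef
    have hzero : Polynomial.reflect k q - Polynomial.X ^ k * q = 0 := by
      apply Polynomial.eq_zero_of_infinite_isRoot
      have hfin : ({(0:ℂ)} ∪ (Inv.inv '' { x | pa.IsRoot x })).Finite :=
        (Set.finite_singleton 0).union ((Polynomial.finite_setOf_isRoot hpa).image _)
      have hsubset : {w : ℂ | w ≠ 0 ∧ pa.eval w⁻¹ ≠ 0}
          ⊆ { x | (Polynomial.reflect k q - Polynomial.X ^ k * q).IsRoot x } := by
        rintro w ⟨hw0, hwa⟩
        letI : Invertible (w⁻¹ : ℂ) := invertibleOfNonzero (inv_ne_zero hw0)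
        have hre := Polynomial.eval₂_reflect_mul_pow (RingHom.id ℂ) (w⁻¹) k q le_rfl
        rw [invOf_eq_inv, inv_inv] at hre
        replace hre : (Polynomial.reflect k q).eval w * w⁻¹ ^ k = q.eval w⁻¹ := hre
        have hqw : q.eval w⁻¹ = q.eval w := by
          rw [hqq w⁻¹ (inv_ne_zero hw0) hwa, inv_inv]
        rw [hqw] at hre
        have hre2 : (Polynomial.reflect k q).eval w = q.eval w * w ^ k := by
          have := congrArg (fun t => t * w ^ k) hre
          simpa [mul_assoc, inv_pow, inv_mul_cancel₀ (pow_ne_zero k hw0)] using this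
        simp only [Set.mem_setOf_eq, Polynomial.IsRoot, Polynomial.eval_sub,
          Polynomial.eval_mul, Polynomial.eval_pow, Polynomial.eval_X, hre2]
        ring
      have hTinf : {w : ℂ | w ≠ 0 ∧ pa.eval w⁻¹ ≠ 0}.Infinite := by
        apply Set.infinite_of_finite_compl
        apply hfin.subset
        intro w hw
        simp only [Set.mem_compl_iff, Set.mem_setOf_eq, not_and_or, not_not, ne_eq] at hw
        rcases hw with hw | hw
        · exact Set.mem_union_left _ (by simpa using hw)
        · refine Set.mem_union_right _ ⟨w⁻¹, hw, inv_inv w⟩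
      exact hTinf.mono hsubset
    have heq : Polynomial.reflect k q = Polynomial.X ^ k * q := sub_eq_zero.mp hzero
    have hc1 : (Polynomial.reflect k q).coeff (k + k) = q.coeff (k + k) := by
      rw [Polynomial.coeff_reflect, Polynomial.revAt_eq_self_of_lt (by omega)]
    have hc2 : (Polynomial.X ^ k * q).coeff (k + k) = q.coeff k :=
      Polynomial.coeff_X_pow_mul q k k
    have hzero2 : q.coeff (k + k) = 0 :=
      Polynomial.coeff_eq_zero_of_natDegree_lt (by omega)
    have hlead : q.coeff k ≠ 0 := by
      rw [hkdef]
      exact Polynomial.leadingCoeff_ne_zero.mpr hqne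
    rw [heq, hc2] at hc1
    rw [hzero2] at hc1
    exact hlead hc1
  obtain ⟨c, rfl⟩ : ∃ c : ℂ, q = Polynomial.C c := ⟨_, Polynomial.eq_C_of_natDegree_eq_zero hqdeg⟩
  have hc : c ≠ 0 := fun h0 => hqne (by rw [h0, map_zero])
  -- the (2,2) pencil block is invertible at z
  have hdtz : pdt.eval z ≠ 0 := by
    rw [hqdt, Polynomial.eval_mul, Polynomial.eval_C]
    exact mul_ne_zero (by rw [heva z]; exact hz) hc
  have hHz : IsUnit (H' + z • H) := by
    rw [Matrix.isUnit_iff_isUnit_det, isUnit_iff_ne_zero]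
    rw [← hevdt z]
    exact hdtz
  -- transposed pencil identity at z
  have hpsi : (Mᵀ + z • M) * W
      = Y * Matrix.fromBlocks (B' + z • A') (G' + z • G) 0 (H' + z • H) := by
    rw [add_mul, Matrix.smul_mul, hE1, hE2, ← Matrix.mul_smul, ← Matrix.mul_add]
    congr 1
    rw [Matrix.fromBlocks_smul, Matrix.fromBlocks_add]
    congr 1 <;> simp
  have hMz : M + z • Mᵀ
      = Matrix.fromBlocks (Cc + z • Ccᵀ) (Dc + z • Acᵀ) (Ac + z • Dcᵀ) (-Bc - z • Bcᵀ) := by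
    rw [hM, Matrix.fromBlocks_transpose, Matrix.fromBlocks_smul, Matrix.fromBlocks_add]
    congr 1 <;> simp [sub_eq_add_neg]
  -- now prove the rank statement
  apply Stmt9Aux.rank_eq_of_vecMul_inj
  intro y hy
  set w : (Fin n ⊕ Fin n) → ℂ := Sum.elim (0 : Fin n → ℂ) y with hwdef
  rw [Matrix.vecMul_fromCols] at hy
  have hy1 : y ᵥ* (Ac + z • Dcᵀ) = 0 := funext fun j => by
    simpa using congrFun hy (Sum.inl j)
  have hy2 : y ᵥ* (-Bc - z • Bcᵀ) = 0 := funext fun j => by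
    simpa using congrFun hy (Sum.inr j)
  have hwvm : w ᵥ* (M + z • Mᵀ) = 0 := by
    rw [hMz, Matrix.vecMul_fromBlocks]
    have hcl : w ∘ Sum.inl = 0 := rfl
    have hcr : w ∘ Sum.inr = y := rfl
    rw [hcl, hcr, Matrix.zero_vecMul, Matrix.zero_vecMul, hy1, hy2]
    simp
  have hpsiw : (Mᵀ + z • M) *ᵥ w = 0 := by
    have ht : (M + z • Mᵀ)ᵀ = Mᵀ + z • M := by
      rw [Matrix.transpose_add, Matrix.transpose_smul, Matrix.transpose_transpose]
    rw [← ht, Matrix.mulVec_transpose, hwvm]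
  set u : (Fin n ⊕ Fin n) → ℂ := W⁻¹ *ᵥ w with hudef
  have hwu : w = W *ᵥ u := by
    rw [hudef, Matrix.mulVec_mulVec, Matrix.mul_nonsing_inv _ hWdet, Matrix.one_mulVec]
  have hTu : Matrix.fromBlocks (B' + z • A') (G' + z • G) 0 (H' + z • H) *ᵥ u = 0 := by
    have h0 : Y *ᵥ (Matrix.fromBlocks (B' + z • A') (G' + z • G) 0 (H' + z • H) *ᵥ u) = 0 := by
      rw [Matrix.mulVec_mulVec, ← hpsi, ← Matrix.mulVec_mulVec, ← hwu, hpsiw]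
    exact Matrix.mulVec_injective_iff_isUnit.mpr hYu
      (by rw [h0, Matrix.mulVec_zero] : Y *ᵥ _ = Y *ᵥ 0)
  rw [Matrix.fromBlocks_mulVec] at hTu
  have hbot : (0 : Matrix (Fin n) (Fin n) ℂ) *ᵥ (u ∘ Sum.inl)
      + (H' + z • H) *ᵥ (u ∘ Sum.inr) = 0 := funext fun i => by
    simpa using congrFun hTu (Sum.inr i)
  rw [Matrix.zero_mulVec, zero_add] at hbot
  have hu2 : u ∘ Sum.inr = 0 := Matrix.mulVec_injective_iff_isUnit.mpr hHz
    (by rw [hbot, Matrix.mulVec_zero] : (H' + z • H) *ᵥ _ = (H' + z • H) *ᵥ 0)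
  have hweq : w = U *ᵥ (u ∘ Sum.inl) := by
    have h1 : W *ᵥ Sum.elim (u ∘ Sum.inl) (0 : Fin n → ℂ) = U *ᵥ (u ∘ Sum.inl) := by
      rw [hWdef, Matrix.fromCols_mulVec_sumElim, Matrix.mulVec_zero, add_zero]
    rw [hwu, ← h1]
    congr 1
    rw [← hu2, Sum.elim_comp_inl_inr]
  have htop : U₁ *ᵥ (u ∘ Sum.inl) = 0 := by
    funext i
    have h1 := congrFun hweq (Sum.inl i)
    rw [hU, Matrix.fromRows_mulVec] at h1
    simpa [hwdef] using h1.symm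
  have hu1 : u ∘ Sum.inl = 0 := Matrix.mulVec_injective_iff_isUnit.mpr hU₁
    (by rw [htop, Matrix.mulVec_zero] : U₁ *ᵥ _ = U₁ *ᵥ 0)
  have hw0 : w = 0 := by rw [hweq, hu1, Matrix.mulVec_zero]
  funext i
  exact congrFun hw0 (Sum.inr i)
end

section
/- Let R = [[0, R₁₂],[R₂₁, R₂₂]] ∈ ℂ^{2m×2m} (2×2 block form with m×m blocks), where R₁₂ and R₂₁ are antitriangular m×m matrices and the pencil R₂₁ + zR₁₂ᵀ is regular with reciprocal-free spectrum. Then: (i) the ⊤-Sylvester equation R₂₁Y + YᵀR₁₂ = −R₂₂ has a unique solution Y ∈ ℂ^{m×m}; (ii) there exist a unitary matrix Q ∈ ℂ^{2m×2m}, antitriangular matrices N₁₂, N₂₁ ∈ ℂ^{m×m}, a matrix N₂₂ ∈ ℂ^{m×m}, and nonzero constants c₁, c₂ ∈ ℂ such that QᵀRQ = [[0, N₁₂],[N₂₁, N₂₂]], det(N₂₁ + zN₁₂ᵀ) = c₁·det(R₁₂ + zR₂₁ᵀ) for all z ∈ ℂ, and det(N₁₂ + zN₂₁ᵀ) = c₂·det(R₂₁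 + zR₁₂ᵀ) for all z ∈ ℂ (so the spectra of the two antidiagonal block pencils are swapped). -/
open scoped Matrix

/-- A k×k matrix is antitriangular if `N i j = 0` whenever `i + j ≤ k` (1-based),
i.e. `(i+1) + (j+1) ≤ k` for 0-based indices. -/
def Antitriangular {k : ℕ} (N : Matrix (Fin k) (Fin k) ℂ) : Prop :=
  ∀ i j : Fin k, (i : ℕ) + 1 + ((j : ℕ) + 1) ≤ k → N i j = 0

section Aux

open Matrix
open scoped ComplexOrder

/-- QR-type decomposition: for an invertible complex matrix `M` there is an
upper triangular `U` with nonzero diagonal such that `M * U` is unitary. -/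
private lemma qr_aux (k : ℕ) (M : Matrix (Fin k) (Fin k) ℂ)
    (hM : ∀ v : Fin k → ℂ, M *ᵥ v = 0 → v = 0) :
    ∃ U : Matrix (Fin k) (Fin k) ℂ,
      (M * U)ᴴ * (M * U) = 1 ∧ (∀ i j : Fin k, j < i → U i j = 0) ∧
      (∀ i : Fin k, U i i ≠ 0) := by
  haveI : WellFoundedLT (Fin k) := inferInstance
  have hS : (Mᴴ * M).PosDef := by
    refine posDef_iff_dotProduct_mulVec.mpr ⟨isHermitian_conjTranspose_mul_self M, fun x hx => ?_⟩
    have : star x ⬝ᵥ (Mᴴ * M) *ᵥ x = star (M *ᵥ x) ⬝ᵥ (M *ᵥ x) := by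
      rw [← mulVec_mulVec, dotProduct_mulVec, ← star_mulVec]
    rw [this]
    exact dotProduct_star_self_pos_iff.mpr (fun h => hx (hM x h))
  set W := LDL.lowerInv hS with hWdef
  set d := LDL.diagEntries hS with hddef
  have hdiag_eq : LDL.diag hS = diagonal d := by
    rw [LDL.diag]
  have hDconj : diagonal d = W * (Mᴴ * M) * Wᴴ := by
    rw [← hdiag_eq]; exact LDL.diag_eq_lowerInv_conj hS
  have hWtri : ∀ i j : Fin k, i < j → W i j = 0 := fun i j hij =>
    LDL.lowerInv_triangular hS hij
  have hWunit : IsUnit W := by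
    rcases LDL.invertibleLowerInv hS with ⟨iW, hiW, hWi⟩
    refine ⟨⟨W, iW, ?_, ?_⟩, rfl⟩
    · convert hWi using 1
    · convert hiW using 1
  have hWdetU : IsUnit W.det := (Matrix.isUnit_iff_isUnit_det W).mp hWunit
  have hWdet : W.det ≠ 0 := hWdetU.ne_zero
  have hWdiag : ∀ i, W i i ≠ 0 := by
    have hblock : W.BlockTriangular OrderDual.toDual := fun i j h => hWtri _ _ h
    have := Matrix.det_of_lowerTriangular W hblock
    rw [this] at hWdet
    intro i hi
    exact hWdet (Finset.prod_eq_zero (Finset.mem_univ i) hi)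
  -- positivity of the diagonal entries
  have hWSW : (W * (Mᴴ * M) * Wᴴ).PosDef := by
    refine posDef_iff_dotProduct_mulVec.mpr ⟨(hS.posSemidef.mul_mul_conjTranspose_same W).isHermitian, fun x hx => ?_⟩
    have hx' : Wᴴ *ᵥ x ≠ 0 := by
      intro h
      have hdetH : IsUnit (Wᴴ).det := by
        rw [Matrix.det_conjTranspose]
        exact hWdetU.star
      apply hx
      have h2 : (Wᴴ)⁻¹ *ᵥ (Wᴴ *ᵥ x) = x := by
        rw [mulVec_mulVec, Matrix.nonsing_inv_mul _ hdetH, one_mulVec]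
      rw [← h2, h, mulVec_zero]
    have h0 := hS.dotProduct_mulVec_pos hx'
    have heq : star (Wᴴ *ᵥ x) ⬝ᵥ (Mᴴ * M) *ᵥ (Wᴴ *ᵥ x)
        = star x ⬝ᵥ (W * (Mᴴ * M) * Wᴴ) *ᵥ x := by
      have := congrArg (fun Z => star x ⬝ᵥ Z *ᵥ x)
        (show Wᴴᴴ * (Mᴴ * M) * Wᴴ = W * (Mᴴ * M) * Wᴴ by rw [conjTranspose_conjTranspose])
      simpa only [star_mulVec, dotProduct_mulVec, vecMul_vecMul] using this
    rwa [heq] at h0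
  have hdpos : ∀ i, 0 < d i :=
    (posDef_diagonal_iff).mp (hDconj ▸ hWSW)
  -- build the scaling diagonal
  set e : Fin k → ℂ := fun i => ((Real.sqrt (d i).re)⁻¹ : ℝ) with he
  have hdre : ∀ i, 0 < (d i).re ∧ (d i).im = 0 := by
    intro i
    have := hdpos i
    rw [Complex.lt_def] at this
    exact ⟨this.1, this.2.symm⟩
  have he_ne : ∀ i, e i ≠ 0 := by
    intro i
    simp only [he, ne_eq, Complex.ofReal_eq_zero, inv_eq_zero]
    exact (Real.sqrt_ne_zero'.mpr (hdre i).1)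
  have hese : ∀ i, star (e i) * d i * e i = 1 := by
    intro i
    obtain ⟨h1, h2⟩ := hdre i
    have hd : d i = ((d i).re : ℂ) := by
      apply Complex.ext <;> simp [h2]
    have hr : ((Real.sqrt (d i).re)⁻¹ : ℝ) * (d i).re * (Real.sqrt (d i).re)⁻¹ = 1 := by
      rw [show ((Real.sqrt (d i).re)⁻¹ : ℝ) * (d i).re * (Real.sqrt (d i).re)⁻¹
          = (d i).re / (Real.sqrt (d i).re * Real.sqrt (d i).re) by ring]
      rw [Real.mul_self_sqrt h1.le, div_self h1.ne']
    show star ((((Real.sqrt (d i).re)⁻¹ : ℝ) : ℂ)) * d i * (((Real.sqrt (d i).re)⁻¹ : ℝ) : ℂ) = 1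
    rw [hd, Complex.star_def, Complex.conj_ofReal, ← Complex.ofReal_mul, ← Complex.ofReal_mul,
      ]
    simp only [Complex.ofReal_re]
    rw [hr, Complex.ofReal_one]
  refine ⟨Wᴴ * diagonal e, ?_, ?_, ?_⟩
  · have h1 : (M * (Wᴴ * diagonal e))ᴴ * (M * (Wᴴ * diagonal e))
        = (diagonal e)ᴴ * (W * (Mᴴ * M) * Wᴴ) * diagonal e := by
      simp only [conjTranspose_mul, conjTranspose_conjTranspose]
      noncomm_ring
    rw [h1, ← hDconj, diagonal_conjTranspose, diagonal_mul_diagonal, diagonal_mul_diagonal]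
    rw [show (fun i => star e i * d i * e i) = fun _ : Fin k => (1:ℂ) from
      funext fun i => hese i]
    exact diagonal_one
  · intro i j hij
    rw [Matrix.mul_diagonal, conjTranspose_apply, hWtri j i hij, star_zero, zero_mul]
  · intro i
    rw [Matrix.mul_diagonal, conjTranspose_apply]
    exact mul_ne_zero (star_ne_zero.mpr (hWdiag i)) (he_ne i)

/-- Determinant of an antitriangular matrix, up to the sign of the reversal
permutation, is the product of the antidiagonal entries. -/
private lemma det_antitri {m : ℕ} (C : Matrix (Fin m) (Fin m) ℂ)
    (hC : ∀ i j : Fin m, (i : ℕ) + 1 + ((j : ℕ) + 1) ≤ m → C i j = 0) :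
    ((Equiv.Perm.sign (Fin.revPerm : Equiv.Perm (Fin m)) : ℤ) : ℂ) * C.det
      = ∏ i : Fin m, C (Fin.rev i) i := by
  have htri : (C.submatrix (Fin.revPerm : Equiv.Perm (Fin m)) id).BlockTriangular id := by
    intro i j hij
    simp only [Matrix.submatrix_apply, id_eq]
    apply hC
    have hi := i.isLt
    have hj := j.isLt
    have : (Fin.rev i : ℕ) = m - 1 - i := by
      rw [Fin.val_rev]; omega
    simp only [Fin.revPerm_apply, this]
    have : (j : ℕ) < (i : ℕ) := hij
    omega
  have h2 := Matrix.det_of_upperTriangular htri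
  have h1 := Matrix.det_permute (Fin.revPerm : Equiv.Perm (Fin m)) C
  rw [h2] at h1
  rw [← h1]
  refine Finset.prod_congr rfl fun i _ => ?_
  simp
/-- Key scalar consequence of the reciprocal-free hypothesis. -/
private lemma key_of_hyps {m : ℕ} (A B : Matrix (Fin m) (Fin m) ℂ)
    (hA : Antitriangular A) (hB : Antitriangular B)
    (hrf : PencilReciprocalFree A Bᵀ) :
    ∀ p q : Fin m,
      A (Fin.rev p) p * A (Fin.rev q) q ≠ B p (Fin.rev p) * B q (Fin.rev q) := by
  set ε : ℂ := ((Equiv.Perm.sign (Fin.revPerm : Equiv.Perm (Fin m)) : ℤ) : ℂ) with hε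
  have hεne : ε ≠ 0 := by
    rcases Int.units_eq_one_or (Equiv.Perm.sign (Fin.revPerm : Equiv.Perm (Fin m)))
      with h | h <;> rw [hε, h] <;> norm_num
  have hdet : ∀ z : ℂ, ε * (A + z • Bᵀ).det
      = ∏ i : Fin m, (A (Fin.rev i) i + z * B i (Fin.rev i)) := by
    intro z
    have hC : ∀ i j : Fin m, (i : ℕ) + 1 + ((j : ℕ) + 1) ≤ m → (A + z • Bᵀ) i j = 0 := by
      intro i j hij
      have h1 := hA i j hij
      have h2 := hB j i (by omega)
      simp [Matrix.add_apply, Matrix.smul_apply, Matrix.transpose_apply, h1, h2]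
    have := det_antitri (A + z • Bᵀ) hC
    rw [this]
    refine Finset.prod_congr rfl fun i _ => ?_
    simp [Matrix.add_apply, Matrix.smul_apply, Matrix.transpose_apply]
  have hdetA : ε * A.det = ∏ i : Fin m, A (Fin.rev i) i := det_antitri A hA
  have hdetB : ε * (Bᵀ).det = ∏ i : Fin m, B i (Fin.rev i) := by
    have hC : ∀ i j : Fin m, (i : ℕ) + 1 + ((j : ℕ) + 1) ≤ m → Bᵀ i j = 0 := by
      intro i j hij
      exact hB j i (by omega)
    have := det_antitri Bᵀ hC
    rw [this]
    exact Finset.prod_congr rfl fun i _ => rfl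
  intro p q heq
  -- all four relevant entries are nonzero
  have hfour : A (Fin.rev p) p ≠ 0 ∧ A (Fin.rev q) q ≠ 0 ∧
      B p (Fin.rev p) ≠ 0 ∧ B q (Fin.rev q) ≠ 0 := by
    rcases not_and_or.mp hrf.2 with h | h
    · have hprod : (∏ i : Fin m, A (Fin.rev i) i) ≠ 0 := by
        rw [← hdetA]
        exact mul_ne_zero hεne h
      have hAs := Finset.prod_ne_zero_iff.mp hprod
      have hap := hAs p (Finset.mem_univ p)
      have haq := hAs q (Finset.mem_univ q)
      have hbb : B p (Fin.rev p) * B q (Fin.rev q) ≠ 0 := heq ▸ mul_ne_zero hap haq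
      exact ⟨hap, haq, fun h0 => hbb (by rw [h0, zero_mul]),
        fun h0 => hbb (by rw [h0, mul_zero])⟩
    · have hprod : (∏ i : Fin m, B i (Fin.rev i)) ≠ 0 := by
        rw [← hdetB]
        exact mul_ne_zero hεne h
      have hBs := Finset.prod_ne_zero_iff.mp hprod
      have hbp := hBs p (Finset.mem_univ p)
      have hbq := hBs q (Finset.mem_univ q)
      have haa : A (Fin.rev p) p * A (Fin.rev q) q ≠ 0 := heq ▸ mul_ne_zero hbp hbq
      exact ⟨fun h0 => haa (by rw [h0, zero_mul]), fun h0 => haa (by rw [h0, mul_zero]),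
        hbp, hbq⟩
  obtain ⟨hap, haq, hbp, hbq⟩ := hfour
  apply hrf.1
  refine ⟨-(A (Fin.rev p) p / B p (Fin.rev p)), -(A (Fin.rev q) q / B q (Fin.rev q)),
    ?_, ?_, ?_⟩
  · field_simp
    linear_combination heq
  · have : ε * (A + (-(A (Fin.rev p) p / B p (Fin.rev p))) • Bᵀ).det = 0 := by
      rw [hdet]
      apply Finset.prod_eq_zero (Finset.mem_univ p)
      field_simp
      ring
    rcases mul_eq_zero.mp this with h | h
    · exact absurd h hεne
    · exact h
  · have : ε * (A + (-(A (Fin.rev q) q / B q (Fin.rev q))) • Bᵀ).det = 0 := by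
      rw [hdet]
      apply Finset.prod_eq_zero (Finset.mem_univ q)
      field_simp
      ring
    rcases mul_eq_zero.mp this with h | h
    · exact absurd h hεne
    · exact h

/-- Injectivity of the ⊤-Sylvester operator. -/
private lemma sylvester_inj {m : ℕ} (A B : Matrix (Fin m) (Fin m) ℂ)
    (hA : Antitriangular A) (hB : Antitriangular B)
    (key : ∀ p q : Fin m,
      A (Fin.rev p) p * A (Fin.rev q) q ≠ B p (Fin.rev p) * B q (Fin.rev q))
    (Y : Matrix (Fin m) (Fin m) ℂ) (hY : A * Y + Yᵀ * B = 0) : Y = 0 := by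
  have hYe : ∀ i j : Fin m,
      (∑ k, A i k * Y k j) + (∑ k, Y k i * B k j) = 0 := by
    intro i j
    have := congrFun (congrFun hY i) j
    simpa [Matrix.add_apply, Matrix.mul_apply, Matrix.transpose_apply] using this
  have main : ∀ n : ℕ, ∀ p q : Fin m,
      2 * m ≤ (p : ℕ) + (q : ℕ) + n + 2 → Y p (Fin.rev q) = 0 := by
    intro n
    induction n using Nat.strong_induction_on with
    | _ n IH =>
      intro p q hpq
      -- the two scalar equations
      have hstep : ∀ p' q' : Fin m, 2 * m ≤ (p' : ℕ) + (q' : ℕ) + n + 2 →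
          A (Fin.rev p') p' * Y p' (Fin.rev q') +
            B q' (Fin.rev q') * Y q' (Fin.rev p') = 0 := by
        intro p' q' hpq'
        have h1 : ∑ k, A (Fin.rev p') k * Y k (Fin.rev q')
            = A (Fin.rev p') p' * Y p' (Fin.rev q') := by
          refine Finset.sum_eq_single p' (fun k _ hk => ?_) (by simp)
          rcases lt_or_gt_of_ne hk with hlt | hgt
          · have : A (Fin.rev p') k = 0 := by
              apply hA
              have := p'.isLt
              have := k.isLt
              rw [Fin.val_rev]
              have : (k:ℕ) < (p':ℕ) := hlt
              omega
            rw [this, zero_mul]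
          · have hn1 : 1 ≤ n := by
              have hk' := k.isLt
              have hq' := q'.isLt
              have : (p':ℕ) < (k:ℕ) := hgt
              omega
            have : Y k (Fin.rev q') = 0 := by
              refine IH (n-1) (by omega) k q' ?_
              have : (p':ℕ) < (k:ℕ) := hgt
              omega
            rw [this, mul_zero]
        have h2 : ∑ k, Y k (Fin.rev p') * B k (Fin.rev q')
            = Y q' (Fin.rev p') * B q' (Fin.rev q') := by
          refine Finset.sum_eq_single q' (fun k _ hk => ?_) (by simp)
          rcases lt_or_gt_of_ne hk with hlt | hgt
          · have : B k (Fin.rev q') = 0 := by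
              apply hB
              have := q'.isLt
              rw [Fin.val_rev]
              have : (k:ℕ) < (q':ℕ) := hlt
              omega
            rw [this, mul_zero]
          · have hn1 : 1 ≤ n := by
              have hk' := k.isLt
              have hp' := p'.isLt
              have : (q':ℕ) < (k:ℕ) := hgt
              omega
            have : Y k (Fin.rev p') = 0 := by
              refine IH (n-1) (by omega) k p' ?_
              have : (q':ℕ) < (k:ℕ) := hgt
              omega
            rw [this, zero_mul]
        have := hYe (Fin.rev p') (Fin.rev q')
        rw [h1, h2] at this
        linear_combination this
      have eq1 := hstep p q hpq
      have eq2 := hstep q p (by omega)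
      have hk := key p q
      have : (A (Fin.rev p) p * A (Fin.rev q) q
          - B p (Fin.rev p) * B q (Fin.rev q)) * Y p (Fin.rev q) = 0 := by
        linear_combination A (Fin.rev q) q * eq1 - B q (Fin.rev q) * eq2
      rcases mul_eq_zero.mp this with h | h
      · exact absurd (sub_eq_zero.mp h) hk
      · exact h
  funext i j
  have : Y i (Fin.rev (Fin.rev j)) = 0 := by
    refine main (2*m) i (Fin.rev j) (by omega)
  simpa using this

/-- lower triangular × antitriangular × upper triangular is antitriangular. -/
private lemma anti_lmu {m : ℕ} (L A U : Matrix (Fin m) (Fin m) ℂ)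
    (hL : ∀ i j : Fin m, i < j → L i j = 0) (hA : Antitriangular A)
    (hU : ∀ i j : Fin m, j < i → U i j = 0) : Antitriangular (L * A * U) := by
  intro i j hij
  rw [Matrix.mul_apply]
  refine Finset.sum_eq_zero fun l _ => ?_
  by_cases hl : (j : Fin m) < l
  · rw [hU l j hl, mul_zero]
  · rw [Matrix.mul_apply]
    have hsum : ∑ k, L i k * A k l = 0 := by
      refine Finset.sum_eq_zero fun k _ => ?_
      by_cases hk : i < k
      · rw [hL i k hk, zero_mul]
      · have : A k l = 0 := by
          apply hA
          have h1 : (k : ℕ) ≤ (i : ℕ) := by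
            have := not_lt.mp hk
            exact_mod_cast this
          have h2 : (l : ℕ) ≤ (j : ℕ) := by
            have := not_lt.mp hl
            exact_mod_cast this
          omega
        rw [this, mul_zero]
    rw [hsum, zero_mul]

end Aux

/-- swapping the two central blocks of an antitriangular ⊤-palindromic
pencil.  If `R₁₂`, `R₂₁` are antitriangular and the pencil `R₂₁ + z R₁₂ᵀ` is regular
with reciprocal-free spectrum, then (i) the ⊤-Sylvester equation
`R₂₁ Y + Yᵀ R₁₂ = −R₂₂` has a unique solution, and (ii) there is a unitary congruence
`Qᵀ R Q` of `R = [[0, R₁₂], [R₂₁, R₂₂]]` that is again antitriangular-blocked with the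
spectra of the two antidiagonal block pencils swapped. -/
theorem swap_central_blocks
    (m : ℕ) (R₁₂ R₂₁ R₂₂ : Matrix (Fin m) (Fin m) ℂ)
    (h₁₂ : Antitriangular R₁₂) (h₂₁ : Antitriangular R₂₁)
    (hreg : PencilRegular R₂₁ R₁₂ᵀ) (hrf : PencilReciprocalFree R₂₁ R₁₂ᵀ) :
    (∃! Y : Matrix (Fin m) (Fin m) ℂ, R₂₁ * Y + Yᵀ * R₁₂ = -R₂₂) ∧
    ∃ (Q : Matrix (Fin m ⊕ Fin m) (Fin m ⊕ Fin m) ℂ)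
      (N₁₂ N₂₁ N₂₂ : Matrix (Fin m) (Fin m) ℂ) (c₁ c₂ : ℂ),
        Qᴴ * Q = 1 ∧
        Antitriangular N₁₂ ∧ Antitriangular N₂₁ ∧ c₁ ≠ 0 ∧ c₂ ≠ 0 ∧
        Qᵀ * Matrix.fromBlocks 0 R₁₂ R₂₁ R₂₂ * Q = Matrix.fromBlocks 0 N₁₂ N₂₁ N₂₂ ∧
        (∀ z : ℂ, (N₂₁ + z • N₁₂ᵀ).det = c₁ * (R₁₂ + z • R₂₁ᵀ).det) ∧
        (∀ z : ℂ, (N₁₂ + z • N₂₁ᵀ).det = c₂ * (R₂₁ + z • R₁₂ᵀ).det) := by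
  classical
  have key := key_of_hyps R₂₁ R₁₂ h₂₁ h₁₂ hrf
  -- the ⊤-Sylvester operator as a linear map
  let f : Matrix (Fin m) (Fin m) ℂ →ₗ[ℂ] Matrix (Fin m) (Fin m) ℂ :=
    { toFun := fun Y => R₂₁ * Y + Yᵀ * R₁₂
      map_add' := fun X Y' => by
        simp only [Matrix.transpose_add, Matrix.add_mul, Matrix.mul_add]
        abel
      map_smul' := fun c Y' => by
        simp only [Matrix.transpose_smul, RingHom.id_apply, smul_add,
          Matrix.smul_mul, Matrix.mul_smul] }
  have hfinj : Function.Injective f := by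
    rw [← LinearMap.ker_eq_bot, LinearMap.ker_eq_bot']
    intro Y hY0
    exact sylvester_inj R₂₁ R₁₂ h₂₁ h₁₂ key Y hY0
  have hfsurj : Function.Surjective f := LinearMap.injective_iff_surjective.mp hfinj
  obtain ⟨Y, hYeq⟩ := hfsurj (-R₂₂)
  have hYeq' : R₂₁ * Y + Yᵀ * R₁₂ = -R₂₂ := hYeq
  refine ⟨⟨Y, hYeq', fun Y' hY' => hfinj (show f Y' = f Y from hY'.trans hYeq'.symm)⟩, ?_⟩
  -- Part (ii)
  set Rb : Matrix (Fin m ⊕ Fin m) (Fin m ⊕ Fin m) ℂ := Matrix.fromBlocks 0 R₁₂ R₂₁ R₂₂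
    with hRb
  set Ms : Matrix (Fin m ⊕ Fin m) (Fin m ⊕ Fin m) ℂ := Matrix.fromBlocks Y 1 1 0 with hMs
  set Mi : Matrix (Fin m ⊕ Fin m) (Fin m ⊕ Fin m) ℂ := Matrix.fromBlocks 0 1 1 (-Y) with hMi
  have hMl : Mi * Ms = 1 := by
    rw [hMi, hMs, Matrix.fromBlocks_multiply]
    simp [Matrix.fromBlocks_one]
  set e : (Fin m ⊕ Fin m) ≃ Fin (m + m) := finSumFinEquiv with he
  set M0 : Matrix (Fin (m + m)) (Fin (m + m)) ℂ := (Matrix.reindex e e) Ms with hM0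
  have hM0li : (Matrix.reindex e e Mi) * M0 = 1 := by
    rw [hM0, Matrix.reindex_apply, Matrix.reindex_apply, Matrix.submatrix_mul_equiv,
      hMl, Matrix.submatrix_one_equiv]
  have hM0v : ∀ v : Fin (m + m) → ℂ, M0 *ᵥ v = 0 → v = 0 := by
    intro v hv
    have h1 : ((Matrix.reindex e e Mi) * M0) *ᵥ v = v := by
      rw [hM0li, Matrix.one_mulVec]
    rw [← h1, ← Matrix.mulVec_mulVec, hv, Matrix.mulVec_zero]
  obtain ⟨U0, hQ0, hU0tri, hU0diag⟩ := qr_aux (m + m) M0 hM0v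
  set U' : Matrix (Fin m ⊕ Fin m) (Fin m ⊕ Fin m) ℂ := (Matrix.reindex e.symm e.symm) U0
    with hU'
  have hU'app : ∀ a b, U' a b = U0 (e a) (e b) := by
    intro a b
    rw [hU', Matrix.reindex_apply, Matrix.submatrix_apply]
    simp
  set U1 := U'.toBlocks₁₁ with hU1
  set U2 := U'.toBlocks₁₂ with hU2
  set U3 := U'.toBlocks₂₂ with hU3
  have hU'blocks : U' = Matrix.fromBlocks U1 U2 0 U3 := by
    have hz : U'.toBlocks₂₁ = 0 := by
      ext i j
      show U' (Sum.inr i) (Sum.inl j) = 0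
      rw [hU'app]
      apply hU0tri
      rw [he]
      simp only [finSumFinEquiv_apply_left, finSumFinEquiv_apply_right]
      rw [Fin.lt_def]
      simp only [Fin.coe_castAdd, Fin.coe_natAdd]
      omega
    rw [hU1, hU2, hU3, ← hz, Matrix.fromBlocks_toBlocks]
  have hU1tri : ∀ i j : Fin m, j < i → U1 i j = 0 := by
    intro i j hij
    rw [hU1, Matrix.toBlocks₁₁]
    simp only [Matrix.of_apply]
    rw [hU'app]
    apply hU0tri
    rw [he]
    simp only [finSumFinEquiv_apply_left]
    rw [Fin.lt_def]
    simpa using hij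
  have hU3tri : ∀ i j : Fin m, j < i → U3 i j = 0 := by
    intro i j hij
    rw [hU3, Matrix.toBlocks₂₂]
    simp only [Matrix.of_apply]
    rw [hU'app]
    apply hU0tri
    rw [he]
    simp only [finSumFinEquiv_apply_right]
    rw [Fin.lt_def]
    simp only [Fin.coe_natAdd]
    omega
  have hU1diag : ∀ i : Fin m, U1 i i ≠ 0 := by
    intro i
    rw [hU1, Matrix.toBlocks₁₁]
    simp only [Matrix.of_apply]
    rw [hU'app]
    exact hU0diag _
  have hU3diag : ∀ i : Fin m, U3 i i ≠ 0 := by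
    intro i
    rw [hU3, Matrix.toBlocks₂₂]
    simp only [Matrix.of_apply]
    rw [hU'app]
    exact hU0diag _
  have hdetU1 : U1.det ≠ 0 := by
    have hbt : U1.BlockTriangular id := fun i j h => hU1tri i j h
    rw [Matrix.det_of_upperTriangular hbt]
    exact Finset.prod_ne_zero_iff.mpr fun i _ => hU1diag i
  have hdetU3 : U3.det ≠ 0 := by
    have hbt : U3.BlockTriangular id := fun i j h => hU3tri i j h
    rw [Matrix.det_of_upperTriangular hbt]
    exact Finset.prod_ne_zero_iff.mpr fun i _ => hU3diag i
  -- the unitary matrix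
  set Q : Matrix (Fin m ⊕ Fin m) (Fin m ⊕ Fin m) ℂ := Ms * U' with hQ
  have hMssub : M0.submatrix e e = Ms := by
    rw [hM0, Matrix.reindex_apply, Matrix.submatrix_submatrix]
    simp [Matrix.submatrix_id_id]
  have hU'sub : U0.submatrix e e = U' := by
    rw [hU', Matrix.reindex_apply]
    congr 1
  have hQrel : Q = (M0 * U0).submatrix e e := by
    rw [← Matrix.submatrix_mul_equiv M0 U0 e e e, hMssub, hU'sub, hQ]
  have hQunit : Qᴴ * Q = 1 := by
    rw [hQrel, Matrix.conjTranspose_submatrix, Matrix.submatrix_mul_equiv, hQ0,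
      Matrix.submatrix_one_equiv]
  -- the central computation
  have h0 : R₂₁ * Y + (Yᵀ * R₁₂ + R₂₂) = 0 := by
    rw [← add_assoc, hYeq']
    exact neg_add_cancel R₂₂
  have hMRM : Msᵀ * Rb * Ms = Matrix.fromBlocks 0 R₂₁ R₁₂ 0 := by
    rw [hMs, hRb, Matrix.fromBlocks_transpose, Matrix.fromBlocks_multiply,
      Matrix.fromBlocks_multiply]
    simp only [Matrix.transpose_one, Matrix.transpose_zero, Matrix.mul_zero,
      Matrix.zero_mul, Matrix.mul_one, Matrix.one_mul, add_zero, zero_add,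
      Matrix.mul_assoc]
    rw [h0]
  have hQt : Qᵀ * Rb * Q = U'ᵀ * (Msᵀ * Rb * Ms) * U' := by
    rw [hQ, Matrix.transpose_mul]
    noncomm_ring
  set N₁₂ := U1ᵀ * (R₂₁ * U3) with hN12
  set N₂₁ := U3ᵀ * (R₁₂ * U1) with hN21
  have hQRQ : ∃ N₂₂ : Matrix (Fin m) (Fin m) ℂ,
      Qᵀ * Rb * Q = Matrix.fromBlocks 0 N₁₂ N₂₁ N₂₂ := by
    refine ⟨U3ᵀ * (R₁₂ * U2) + U2ᵀ * (R₂₁ * U3), ?_⟩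
    rw [hQt, hMRM, hU'blocks, Matrix.fromBlocks_transpose, Matrix.fromBlocks_multiply,
      Matrix.fromBlocks_multiply]
    simp only [Matrix.mul_zero, Matrix.zero_mul, Matrix.mul_one, Matrix.one_mul,
      add_zero, zero_add, Matrix.transpose_zero, Matrix.mul_assoc, hN12, hN21]
  obtain ⟨N₂₂, hQRQ⟩ := hQRQ
  have ht12 : N₁₂ᵀ = U3ᵀ * (R₂₁ᵀ * U1) := by
    rw [hN12, Matrix.transpose_mul, Matrix.transpose_mul, Matrix.transpose_transpose,
      Matrix.mul_assoc]
  have ht21 : N₂₁ᵀ = U1ᵀ * (R₁₂ᵀ * U3) := by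
    rw [hN21, Matrix.transpose_mul, Matrix.transpose_mul, Matrix.transpose_transpose,
      Matrix.mul_assoc]
  refine ⟨Q, N₁₂, N₂₁, N₂₂, U3.det * U1.det, U1.det * U3.det, hQunit, ?_, ?_,
    mul_ne_zero hdetU3 hdetU1, mul_ne_zero hdetU1 hdetU3, hQRQ, ?_, ?_⟩
  · rw [hN12, ← Matrix.mul_assoc]
    exact anti_lmu U1ᵀ R₂₁ U3
      (fun i j hij => by rw [Matrix.transpose_apply]; exact hU1tri j i hij) h₂₁ hU3tri
  · rw [hN21, ← Matrix.mul_assoc]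
    exact anti_lmu U3ᵀ R₁₂ U1
      (fun i j hij => by rw [Matrix.transpose_apply]; exact hU3tri j i hij) h₁₂ hU1tri
  · intro z
    have hfact : N₂₁ + z • N₁₂ᵀ = U3ᵀ * ((R₁₂ + z • R₂₁ᵀ) * U1) := by
      rw [ht12, hN21, Matrix.add_mul, Matrix.mul_add, Matrix.smul_mul, Matrix.mul_smul]
    rw [hfact, ← Matrix.mul_assoc, Matrix.det_mul, Matrix.det_mul, Matrix.det_transpose]
    ring
  · intro z
    have hfact : N₁₂ + z • N₂₁ᵀ = U1ᵀ * ((R₂₁ + z • R₁₂ᵀ) * U3) := by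
      rw [ht21, hN12, Matrix.add_mul, Matrix.mul_add, Matrix.smul_mul, Matrix.mul_smul]
    rw [hfact, ← Matrix.mul_assoc, Matrix.det_mul, Matrix.det_mul, Matrix.det_transpose]
    ring
end

section
/- Let A, B, C, D ∈ ℝ^{n×n}, M = [[C, D],[A, −B]] ∈ ℝ^{2n×2n}, and suppose the pencil φ(z) = M + zMᵀ is regular. Let X ∈ ℂ^{n×n} and suppose there exist V ∈ ℂ^{2n×n} of rank n and A', B' ∈ ℂ^{n×n} such that M·[I; X] = V·A' and Mᵀ·[I; X] = V·B', where the pencil A' + zB' is regular with reciprocal-free spectrum. Then X is a solution of the ⊤-NARE, i.e., DX + XᵀA − XᵀBX + C = 0. -/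
open scoped Matrix

lemma pencil_det_eval {n : ℕ} (A B : Matrix (Fin n) (Fin n) ℂ) (z : ℂ) :
    ((A.map Polynomial.C + (Polynomial.X : Polynomial ℂ) • B.map Polynomial.C).det).eval z
      = (A + z • B).det := by
  have h := RingHom.map_det (Polynomial.evalRingHom z)
      (A.map Polynomial.C + (Polynomial.X : Polynomial ℂ) • B.map Polynomial.C)
  rw [Polynomial.coe_evalRingHom] at h
  rw [h]
  congr 1
  ext i j
  simp [Matrix.map_apply, Matrix.add_apply, Matrix.smul_apply, smul_eq_mul]
  ring

lemma charpoly_eval {n : ℕ} (G : Matrix (Fin n) (Fin n) ℂ) (a : ℂ) :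
    (G.charpoly).eval a = (a • (1 : Matrix (Fin n) (Fin n) ℂ) - G).det := by
  rw [Matrix.charpoly]
  have h := RingHom.map_det (Polynomial.evalRingHom a) (Matrix.charmatrix G)
  rw [Polynomial.coe_evalRingHom] at h
  rw [h]
  congr 1
  ext i j
  by_cases hij : i = j <;>
    simp [Matrix.charmatrix_apply, hij, Matrix.one_apply, Matrix.diagonal_apply,
      Matrix.smul_apply, smul_eq_mul]

lemma comm_pow {n : ℕ} (K G H : Matrix (Fin n) (Fin n) ℂ)
    (h : K * G = H * K) : ∀ f : Polynomial ℂ,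
    K * (Polynomial.aeval G f) = (Polynomial.aeval H f) * K := by
  have hpow : ∀ k : ℕ, K * G ^ k = H ^ k * K := by
    intro k
    induction k with
    | zero => simp
    | succ k ih =>
        rw [pow_succ, pow_succ, ← Matrix.mul_assoc, ih, Matrix.mul_assoc, h,
          ← Matrix.mul_assoc]
  intro f
  induction f using Polynomial.induction_on' with
  | add p q hp hq => simp [Matrix.mul_add, Matrix.add_mul, hp, hq]
  | monomial k a =>
      simp only [Polynomial.aeval_monomial]
      rw [Matrix.mul_assoc] at *
      simp only [Algebra.algebraMap_eq_smul_one, Matrix.smul_mul, Matrix.mul_smul,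
        Matrix.one_mul, Matrix.mul_one]
      rw [hpow k]

/-- Uniqueness (homogeneous case) for the ⊤-Sylvester equation associated with a
regular, reciprocal-free pencil. -/
lemma tsylvester_unique {n : ℕ} (A' B' K : Matrix (Fin n) (Fin n) ℂ)
    (hreg : PencilRegular A' B') (hrf : PencilReciprocalFree A' B')
    (h1 : K * A' = B'ᵀ * Kᵀ) (h2 : K * B' = A'ᵀ * Kᵀ) : K = 0 := by
  classical
  obtain ⟨z₀, hz₀⟩ := hreg
  set p : Polynomial ℂ :=
    (A'.map Polynomial.C + (Polynomial.X : Polynomial ℂ) • B'.map Polynomial.C).det with hp_def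
  set q : Polynomial ℂ :=
    (B'.map Polynomial.C + (Polynomial.X : Polynomial ℂ) • A'.map Polynomial.C).det with hq_def
  have hpeval : ∀ z : ℂ, p.eval z = (A' + z • B').det := fun z => pencil_det_eval A' B' z
  have hqeval : ∀ z : ℂ, q.eval z = (B' + z • A').det := fun z => pencil_det_eval B' A' z
  have hp : p ≠ 0 := by
    intro h
    apply hz₀
    rw [← hpeval z₀, h, Polynomial.eval_zero]
  have hq : q ≠ 0 := by
    obtain ⟨w, hw⟩ := Infinite.exists_notMem_finset (p.roots.toFinset ∪ {0})
    simp only [Finset.mem_union, Multiset.mem_toFinset, Finset.mem_singleton] at hw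
    push_neg at hw
    have hw0 : w ≠ 0 := hw.2
    have hpw : p.eval w ≠ 0 := by
      intro h
      exact hw.1 (Polynomial.mem_roots'.mpr ⟨hp, h⟩)
    intro h
    apply hpw
    have hkey : B' + w⁻¹ • A' = w⁻¹ • (A' + w • B') := by
      rw [smul_add, smul_smul, inv_mul_cancel₀ hw0, one_smul, add_comm]
    have := hqeval w⁻¹
    rw [h, Polynomial.eval_zero] at this
    rw [hkey, Matrix.det_smul] at this
    rw [← hpeval w] at this
    rcases mul_eq_zero.mp this.symm with h' | h'
    · exact absurd h' (pow_ne_zero _ (inv_ne_zero hw0))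
    · exact h'
  -- choose a good point z
  obtain ⟨z, hz⟩ := Infinite.exists_notMem_finset
    (p.roots.toFinset ∪ q.roots.toFinset ∪ {0, 1, -1})
  simp only [Finset.mem_union, Multiset.mem_toFinset, Finset.mem_insert,
    Finset.mem_singleton] at hz
  push_neg at hz
  obtain ⟨⟨hzp, hzq⟩, hz0, hz1, hzm1⟩ := hz
  have hpz : (A' + z • B').det ≠ 0 := by
    rw [← hpeval]; intro h; exact hzp (Polynomial.mem_roots'.mpr ⟨hp, h⟩)
  have hqz : (B' + z • A').det ≠ 0 := by
    rw [← hqeval]; intro h; exact hzq (Polynomial.mem_roots'.mpr ⟨hq, h⟩)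
  set N : Matrix (Fin n) (Fin n) ℂ := A' + z • B' with hN_def
  set P : Matrix (Fin n) (Fin n) ℂ := B' + z • A' with hP_def
  have hNdet : IsUnit N.det := isUnit_iff_ne_zero.mpr hpz
  have hPdet : IsUnit P.det := isUnit_iff_ne_zero.mpr hqz
  have hPTdet : IsUnit (Pᵀ).det := by rwa [Matrix.det_transpose]
  have hKN : K * N = Pᵀ * Kᵀ := by
    rw [hN_def, hP_def, Matrix.mul_add, Matrix.mul_smul, h1, h2,
      Matrix.transpose_add, Matrix.transpose_smul, Matrix.add_mul, Matrix.smul_mul]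
  have hKP : K * P = Nᵀ * Kᵀ := by
    rw [hN_def, hP_def, Matrix.mul_add, Matrix.mul_smul, h1, h2,
      Matrix.transpose_add, Matrix.transpose_smul, Matrix.add_mul, Matrix.smul_mul]
  have hKt : Kᵀ = (Pᵀ)⁻¹ * (K * N) := by
    rw [hKN, ← Matrix.mul_assoc, Matrix.nonsing_inv_mul _ hPTdet, Matrix.one_mul]
  set G : Matrix (Fin n) (Fin n) ℂ := P * N⁻¹ with hG_def
  set H : Matrix (Fin n) (Fin n) ℂ := P⁻¹ * N with hH_def
  have hcomm : K * G = Hᵀ * K := by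
    rw [hG_def, ← Matrix.mul_assoc, hKP, hKt]
    rw [hH_def, Matrix.transpose_mul, Matrix.transpose_nonsing_inv]
    rw [Matrix.mul_assoc, Matrix.mul_assoc, Matrix.mul_assoc,
      Matrix.mul_nonsing_inv _ hNdet, Matrix.mul_one, Matrix.mul_assoc]
  have hmain := comm_pow K G Hᵀ hcomm G.charpoly
  rw [Matrix.aeval_self_charpoly, Matrix.mul_zero] at hmain
  -- show K = 0
  by_contra hK
  have hdet : (Polynomial.aeval Hᵀ G.charpoly).det = 0 := by
    by_contra hd
    apply hK
    have hu : IsUnit (Polynomial.aeval Hᵀ G.charpoly).det := isUnit_iff_ne_zero.mpr hd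
    calc K = ((Polynomial.aeval Hᵀ G.charpoly)⁻¹ * (Polynomial.aeval Hᵀ G.charpoly)) * K := by
            rw [Matrix.nonsing_inv_mul _ hu, Matrix.one_mul]
      _ = (Polynomial.aeval Hᵀ G.charpoly)⁻¹ * ((Polynomial.aeval Hᵀ G.charpoly) * K) := by
            rw [Matrix.mul_assoc]
      _ = 0 := by rw [← hmain, Matrix.mul_zero]
  -- factor the charpoly
  set l : List ℂ := G.charpoly.roots.toList with hl_def
  have hsplit : G.charpoly = (l.map (fun a => Polynomial.X - Polynomial.C a)).prod := by
    rw [(IsAlgClosed.splits G.charpoly).eq_prod_roots_of_monic (Matrix.charpoly_monic G)]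
    rw [hl_def, ← Multiset.coe_toList G.charpoly.roots, Multiset.map_coe, Multiset.prod_coe,
      Multiset.coe_toList]
  have haeval : Polynomial.aeval Hᵀ G.charpoly =
      ((l.map (fun a => Hᵀ - a • (1 : Matrix (Fin n) (Fin n) ℂ))).prod) := by
    conv_lhs => rw [hsplit]
    rw [map_list_prod (Polynomial.aeval Hᵀ), List.map_map]
    congr 1
    apply List.map_congr_left
    intro a _
    simp [Algebra.algebraMap_eq_smul_one]
  rw [haeval] at hdet
  rw [show ((List.map (fun a => Hᵀ - a • (1 : Matrix (Fin n) (Fin n) ℂ)) l).prod).det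
      = (List.map (fun M : Matrix (Fin n) (Fin n) ℂ => M.det)
          (List.map (fun a => Hᵀ - a • (1 : Matrix (Fin n) (Fin n) ℂ)) l)).prod from
    map_list_prod (Matrix.detMonoidHom) _] at hdet
  rw [List.prod_eq_zero_iff, List.map_map] at hdet
  obtain ⟨a, hal, hadet⟩ := List.mem_map.mp hdet
  have haroot : a ∈ G.charpoly.roots := by
    rwa [← Multiset.mem_toList]
  -- a is a root of charpoly of G
  have hGa : (a • (1 : Matrix (Fin n) (Fin n) ℂ) - G).det = 0 := by
    rw [← charpoly_eval]
    exact (Polynomial.mem_roots'.mp haroot).2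
  have hHa : (H - a • (1 : Matrix (Fin n) (Fin n) ℂ)).det = 0 := by
    rw [← Matrix.det_transpose]
    rw [Matrix.transpose_sub, Matrix.transpose_smul, Matrix.transpose_one]
    exact hadet
  -- translate to pencil determinants
  have hE1 : ((a - z) • A' + (a * z - 1) • B').det = 0 := by
    have key : (a • (1 : Matrix (Fin n) (Fin n) ℂ) - G) * N = (a - z) • A' + (a * z - 1) • B' := by
      rw [Matrix.sub_mul, Matrix.smul_mul, Matrix.one_mul, hG_def,
        Matrix.mul_assoc, Matrix.nonsing_inv_mul _ hNdet, Matrix.mul_one]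
      rw [hN_def, hP_def]
      module
    have := congrArg Matrix.det key
    rw [Matrix.det_mul, hGa, zero_mul] at this
    exact this.symm
  have hE2 : ((1 - a * z) • A' + (z - a) • B').det = 0 := by
    have key : P * (H - a • (1 : Matrix (Fin n) (Fin n) ℂ)) = (1 - a * z) • A' + (z - a) • B' := by
      rw [Matrix.mul_sub, Matrix.mul_smul, Matrix.mul_one, hH_def,
        ← Matrix.mul_assoc, Matrix.mul_nonsing_inv _ hPdet, Matrix.one_mul]
      rw [hN_def, hP_def]
      module
    have := congrArg Matrix.det key
    rw [Matrix.det_mul, hHa, mul_zero] at this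
    exact this.symm
  -- case analysis
  have hdetA : ∀ c : ℂ, c ≠ 0 → ((c • A').det = 0 → A'.det = 0) := by
    intro c hc h
    rw [Matrix.det_smul] at h
    rcases mul_eq_zero.mp h with h' | h'
    · exact absurd h' (pow_ne_zero _ hc)
    · exact h'
  by_cases hc : a - z = 0
  · -- a = z ; then a*z-1 = z^2-1 ≠ 0
    have haz : a = z := sub_eq_zero.mp hc
    have hd : a * z - 1 ≠ 0 := by
      rw [haz]
      intro h
      have : (z - 1) * (z + 1) = 0 := by ring_nf; linear_combination h
      rcases mul_eq_zero.mp this with h' | h'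
      · exact hz1 (sub_eq_zero.mp h')
      · exact hzm1 (eq_neg_of_add_eq_zero_left h')
    apply hrf.2
    constructor
    · -- from hE2
      have : ((1 - a*z) • A').det = 0 := by
        have e : (1 - a*z) • A' = (1 - a * z) • A' + (z - a) • B' := by
          rw [haz]; module
        rw [e]; exact hE2
      apply hdetA _ _ this
      intro h
      exact hd (by linear_combination -h)
    · have : ((a*z - 1) • B').det = 0 := by
        have e : (a*z - 1) • B' = (a - z) • A' + (a * z - 1) • B' := by
          rw [haz]; module
        rw [e]; exact hE1
      rw [Matrix.det_smul] at this
      rcases mul_eq_zero.mp this with h' | h'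
      · exact absurd h' (pow_ne_zero _ hd)
      · exact h'
  · by_cases hd : a * z - 1 = 0
    · -- a = 1/z
      apply hrf.2
      constructor
      · have : ((a - z) • A').det = 0 := by
          have e : (a - z) • A' = (a - z) • A' + (a * z - 1) • B' := by
            rw [hd]; module
          rw [e]; exact hE1
        exact hdetA _ hc this
      · have : ((z - a) • B').det = 0 := by
          have e : (z - a) • B' = (1 - a * z) • A' + (z - a) • B' := by
            have h1' : (1 : ℂ) - a * z = 0 := by linear_combination -hd
            rw [h1']; module
          rw [e]; exact hE2
        rw [Matrix.det_smul] at this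
        rcases mul_eq_zero.mp this with h' | h'
        · exact absurd h' (pow_ne_zero _ (fun h => hc (by linear_combination -h)))
        · exact h'
    · -- general reciprocal pair
      apply hrf.1
      refine ⟨(a*z - 1)/(a - z), (a - z)/(a*z - 1), by field_simp, ?_, ?_⟩
      · have e : (a - z) • (A' + ((a*z - 1)/(a - z)) • B') = (a - z) • A' + (a*z - 1) • B' := by
          rw [smul_add, smul_smul, mul_div_cancel₀ _ hc]
        have : ((a - z) • (A' + ((a*z - 1)/(a - z)) • B')).det = 0 := by rw [e]; exact hE1
        rw [Matrix.det_smul] at this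
        rcases mul_eq_zero.mp this with h' | h'
        · exact absurd h' (pow_ne_zero _ hc)
        · exact h'
      · have e : (a*z - 1) • (A' + ((a - z)/(a*z - 1)) • B')
            = (-1 : ℂ) • ((1 - a*z) • A' + (z - a) • B') := by
          rw [smul_add, smul_smul, mul_div_cancel₀ _ hd]
          module
        have : ((a*z - 1) • (A' + ((a - z)/(a*z - 1)) • B')).det = 0 := by
          rw [e, Matrix.det_smul, hE2, mul_zero]
        rw [Matrix.det_smul] at this
        rcases mul_eq_zero.mp this with h' | h'
        · exact absurd h' (pow_ne_zero _ hd)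
        · exact h'

/-- Theorem 2 of [BIMP]: if the pencil `φ(z) = M + z Mᵀ` associated with
`M = [[C, D], [A, −B]]` (viewed over ℂ) is regular and the columns of `[I; X]` span a
deflating subspace of `φ(z)` associated with a reciprocal-free set of eigenvalues
(i.e. `M [I; X] = V A'`, `Mᵀ [I; X] = V B'` with `V` of rank n and `A' + z B'`
regular with reciprocal-free spectrum), then `X` solves the ⊤-NARE
`D X + Xᵀ A − Xᵀ B X + C = 0`. -/
theorem graph_deflating_subspace_gives_tNARE_solution
    (n : ℕ) (A B C D : Matrix (Fin n) (Fin n) ℝ) :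
    ∀ Ac Bc Cc Dc : Matrix (Fin n) (Fin n) ℂ,
      Ac = A.map (Complex.ofReal ·) → Bc = B.map (Complex.ofReal ·) →
      Cc = C.map (Complex.ofReal ·) → Dc = D.map (Complex.ofReal ·) →
      ∀ M : Matrix (Fin n ⊕ Fin n) (Fin n ⊕ Fin n) ℂ,
        M = Matrix.fromBlocks Cc Dc Ac (-Bc) →
        PencilRegular M Mᵀ →
        ∀ (X : Matrix (Fin n) (Fin n) ℂ)
          (V : Matrix (Fin n ⊕ Fin n) (Fin n) ℂ)
          (A' B' : Matrix (Fin n) (Fin n) ℂ),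
          V.rank = n →
          M * Matrix.fromRows 1 X = V * A' →
          Mᵀ * Matrix.fromRows 1 X = V * B' →
          PencilRegular A' B' → PencilReciprocalFree A' B' →
          Dc * X + Xᵀ * Ac - Xᵀ * Bc * X + Cc = 0 := by
  intro Ac Bc Cc Dc hA hB hC hD M hM hphi X V A' B' hV h1 h2 hreg hrf
  clear hA hB hC hD hphi hV
  set U : Matrix (Fin n ⊕ Fin n) (Fin n) ℂ := Matrix.fromRows 1 X with hU_def
  set W : Matrix (Fin n) (Fin n ⊕ Fin n) ℂ :=
    Matrix.fromCols (1 : Matrix (Fin n) (Fin n) ℂ) Xᵀ with hW_def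
  set K : Matrix (Fin n) (Fin n) ℂ := W * V with hK_def
  set R : Matrix (Fin n) (Fin n) ℂ := Dc * X + Xᵀ * Ac - Xᵀ * Bc * X + Cc with hR_def
  have hUt : Uᵀ = W := by
    rw [hU_def, Matrix.transpose_fromRows, Matrix.transpose_one]
  have hWt : Wᵀ = U := by
    rw [hW_def, Matrix.transpose_fromCols, Matrix.transpose_one, Matrix.transpose_transpose]
  have hMU : M * U = Matrix.fromRows (Cc + Dc * X) (Ac - Bc * X) := by
    rw [hU_def, hM, Matrix.fromBlocks_mul_fromRows]
    simp [Matrix.neg_mul, sub_eq_add_neg]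
  have hWMU : W * (M * U) = R := by
    rw [hMU, hW_def, Matrix.fromCols_mul_fromRows, Matrix.one_mul, Matrix.mul_sub,
      hR_def, ← Matrix.mul_assoc]
    abel
  have hKA : K * A' = R := by
    rw [hK_def, Matrix.mul_assoc, ← h1]
    exact hWMU
  have hKB : K * B' = Rᵀ := by
    rw [hK_def, Matrix.mul_assoc, ← h2, ← hWMU, ← Matrix.mul_assoc,
      Matrix.transpose_mul, Matrix.transpose_mul, hUt, hWt]
    rfl
  have hT1 : K * A' = B'ᵀ * Kᵀ := by
    rw [hKA, ← Matrix.transpose_transpose R]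
    rw [← hKB, Matrix.transpose_mul]
  have hT2 : K * B' = A'ᵀ * Kᵀ := by
    rw [hKB, ← hKA, Matrix.transpose_mul]
  have hK0 : K = 0 := tsylvester_unique A' B' K hreg hrf hT1 hT2
  rw [← hKA, hK0, Matrix.zero_mul]
end
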